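/- arXiv:2411.01682 — 7 statements merged into one kernel-verified Lean document; each statement's English description precedes it below -/
import Mathlib

section
/- Let σ ∈ (1/2, 1), K ≥ 0, and let φ : (0, ∞) → ℝ be continuous with |φ(τ)| ≤ K·τ^{σ−1} for all τ > 0. Set u(x) := 𝒥[φ](|x|). Then there is a constant C = C(σ), depending only on σ, such that for every x ∈ ℝ² \ {0}: |u(x)| ≤ K|x|^{σ+1}/(σ+1)², |∇u(x)| ≤ K|x|^{σ}/(σ+1), and |∂²_{x_i x_j} u(x)| ≤ C·K·|x|^{σ−1} for all i, j ∈ {1, 2}. -/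
open MeasureTheory
open scoped RealInnerProductSpace

noncomputable section

/-- `ℝ²` as a Euclidean space. -/
abbrev E2 : Type := EuclideanSpace ℝ (Fin 2)

/-- The radial inverse Laplacian `𝒥[φ](r) = ∫₀^r ρ⁻¹ (∫₀^ρ τ φ(τ) dτ) dρ`. -/
def calJ (φ : ℝ → ℝ) (r : ℝ) : ℝ :=
  ∫ ρ in Set.Ioc (0 : ℝ) r, (∫ τ in Set.Ioc (0 : ℝ) ρ, τ * φ τ) / ρ

/-- Partial derivative in the `i`-th coordinate direction. -/
def pd (i : Fin 2) (u : E2 → ℝ) (y : E2) : ℝ :=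
  fderiv ℝ u y (EuclideanSpace.single i 1)

lemma norm_hasFDerivAt {x : E2} (hx : x ≠ 0) :
    HasFDerivAt (fun y : E2 => ‖y‖) (‖x‖⁻¹ • innerSL ℝ x) x := by
  have hin : (⟪x, x⟫) ≠ 0 := inner_self_ne_zero.2 hx
  have h1 : HasFDerivAt (fun y : E2 => ⟪y, y⟫)
      ((fderivInnerCLM ℝ (x, x)).comp ((ContinuousLinearMap.id ℝ E2).prod
        (ContinuousLinearMap.id ℝ E2))) x :=
    (hasFDerivAt_id x).inner ℝ (hasFDerivAt_id x)
  have h2 : HasDerivAt Real.sqrt (1 / (2 * Real.sqrt ⟪x, x⟫)) ⟪x, x⟫ :=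
    Real.hasDerivAt_sqrt hin
  have h3 := HasDerivAt.comp_hasFDerivAt (f := fun y : E2 => ⟪y, y⟫) x h2 h1
  have hfun : (Real.sqrt ∘ fun y : E2 => ⟪y, y⟫) = fun y : E2 => ‖y‖ := by
    funext y; exact (norm_eq_sqrt_real_inner y).symm
  rw [hfun] at h3
  refine h3.congr_fderiv ?_
  ext v
  simp only [ContinuousLinearMap.smul_apply, innerSL_apply_apply, ContinuousLinearMap.comp_apply,
    ContinuousLinearMap.prod_apply, ContinuousLinearMap.id_apply, fderivInnerCLM_apply]
  rw [← norm_eq_sqrt_real_inner, real_inner_comm v x]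
  have hxn : ‖x‖ ≠ 0 := norm_ne_zero_iff.2 hx
  field_simp
  ring

section Aux

/-- primitive `G(r) = ∫₀^r τ φ(τ) dτ` (interval-integral version). -/
def GG (φ : ℝ → ℝ) (r : ℝ) : ℝ := ∫ τ in (0:ℝ)..r, τ * φ τ

/-- `J(r) = ∫₀^r G(ρ)/ρ dρ` (interval-integral version). -/
def JJ (φ : ℝ → ℝ) (r : ℝ) : ℝ := ∫ ρ in (0:ℝ)..r, GG φ ρ / ρ

variable {σ K : ℝ} {φ : ℝ → ℝ}

lemma fc (hφc : ContinuousOn φ (Set.Ioi 0)) :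
    ContinuousOn (fun τ : ℝ => τ * φ τ) (Set.Ioi 0) :=
  continuous_id.continuousOn.mul hφc

lemma f_bound (hσ : σ ∈ Set.Ioo (1 / 2 : ℝ) 1)
    (hφb : ∀ τ : ℝ, 0 < τ → |φ τ| ≤ K * τ ^ (σ - 1)) :
    ∀ τ : ℝ, 0 < τ → |τ * φ τ| ≤ K * τ ^ σ := by
  intro τ hτ
  have h1 : τ ^ σ = τ ^ (σ - 1) * τ := by
    rw [← Real.rpow_add_one hτ.ne' (σ - 1)]; ring_nf
  rw [abs_mul, abs_of_pos hτ, h1]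
  calc τ * |φ τ| ≤ τ * (K * τ ^ (σ - 1)) := by
        exact mul_le_mul_of_nonneg_left (hφb τ hτ) hτ.le
    _ = K * (τ ^ (σ - 1) * τ) := by ring

lemma f_int (hσ : σ ∈ Set.Ioo (1 / 2 : ℝ) 1) (hK : 0 ≤ K)
    (hφc : ContinuousOn φ (Set.Ioi 0))
    (hφb : ∀ τ : ℝ, 0 < τ → |φ τ| ≤ K * τ ^ (σ - 1)) {r : ℝ} (hr : 0 < r) :
    IntervalIntegrable (fun τ : ℝ => τ * φ τ) volume 0 r := by
  rw [intervalIntegrable_iff_integrableOn_Ioc_of_le hr.le]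
  have hmeas : AEStronglyMeasurable (fun τ : ℝ => τ * φ τ)
      (volume.restrict (Set.Ioc 0 r)) :=
    ((fc hφc).mono Set.Ioc_subset_Ioi_self).aestronglyMeasurable measurableSet_Ioc
  have hg : IntegrableOn (fun τ : ℝ => K * τ ^ σ) (Set.Ioc 0 r) := by
    have := (intervalIntegral.intervalIntegrable_rpow' (r := σ) (by linarith [hσ.1]) (a := 0) (b := r)).const_mul K
    rwa [intervalIntegrable_iff_integrableOn_Ioc_of_le hr.le] at this
  refine hg.mono' hmeas ?_
  filter_upwards [ae_restrict_mem measurableSet_Ioc] with τ hτ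
  exact f_bound hσ hφb τ hτ.1

lemma GG_bound (hσ : σ ∈ Set.Ioo (1 / 2 : ℝ) 1) (hK : 0 ≤ K)
    (hφc : ContinuousOn φ (Set.Ioi 0))
    (hφb : ∀ τ : ℝ, 0 < τ → |φ τ| ≤ K * τ ^ (σ - 1)) {r : ℝ} (hr : 0 < r) :
    |GG φ r| ≤ K * r ^ (σ + 1) / (σ + 1) := by
  have hσ1 : (0:ℝ) < σ + 1 := by linarith [hσ.1]
  have h1 : ‖∫ τ in (0:ℝ)..r, τ * φ τ‖ ≤ |∫ τ in (0:ℝ)..r, K * τ ^ σ| := by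
    have hb : IntervalIntegrable (fun τ : ℝ => K * τ ^ σ) volume 0 r :=
      (intervalIntegral.intervalIntegrable_rpow' (r := σ) (a := 0) (b := r)
        (by linarith [hσ.1])).const_mul K
    refine intervalIntegral.norm_integral_le_abs_of_norm_le ?_ hb
    rw [Set.uIoc_of_le hr.le]
    filter_upwards [ae_restrict_mem measurableSet_Ioc] with τ hτ
    exact f_bound hσ hφb τ hτ.1
  rw [show ‖∫ τ in (0:ℝ)..r, τ * φ τ‖ = |GG φ r| from rfl] at h1
  have h2 : ∫ τ in (0:ℝ)..r, K * τ ^ σ = K * r ^ (σ + 1) / (σ + 1) := by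
    rw [intervalIntegral.integral_const_mul, integral_rpow (Or.inl (by linarith [hσ.1]))]
    rw [Real.zero_rpow (by positivity)]
    ring
  rw [h2] at h1
  calc |GG φ r| ≤ |K * r ^ (σ + 1) / (σ + 1)| := h1
    _ = K * r ^ (σ + 1) / (σ + 1) := abs_of_nonneg (by positivity)

lemma GG_deriv (hσ : σ ∈ Set.Ioo (1 / 2 : ℝ) 1) (hK : 0 ≤ K)
    (hφc : ContinuousOn φ (Set.Ioi 0))
    (hφb : ∀ τ : ℝ, 0 < τ → |φ τ| ≤ K * τ ^ (σ - 1)) {r : ℝ} (hr : 0 < r) :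
    HasDerivAt (GG φ) (r * φ r) r := by
  refine intervalIntegral.integral_hasDerivAt_right (f_int hσ hK hφc hφb hr) ?_ ?_
  · exact AEStronglyMeasurable.stronglyMeasurableAtFilter_of_mem
      ((fc hφc).aestronglyMeasurable measurableSet_Ioi) (isOpen_Ioi.mem_nhds hr)
  · exact (fc hφc).continuousAt (isOpen_Ioi.mem_nhds hr)

lemma GG_cont (hσ : σ ∈ Set.Ioo (1 / 2 : ℝ) 1) (hK : 0 ≤ K)
    (hφc : ContinuousOn φ (Set.Ioi 0))
    (hφb : ∀ τ : ℝ, 0 < τ → |φ τ| ≤ K * τ ^ (σ - 1)) :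
    ContinuousOn (fun ρ : ℝ => GG φ ρ / ρ) (Set.Ioi 0) := by
  intro ρ hρ
  exact (((GG_deriv hσ hK hφc hφb hρ).continuousAt.div continuousAt_id
    (ne_of_gt hρ))).continuousWithinAt

lemma GGdiv_bound (hσ : σ ∈ Set.Ioo (1 / 2 : ℝ) 1) (hK : 0 ≤ K)
    (hφc : ContinuousOn φ (Set.Ioi 0))
    (hφb : ∀ τ : ℝ, 0 < τ → |φ τ| ≤ K * τ ^ (σ - 1)) {ρ : ℝ} (hρ : 0 < ρ) :
    |GG φ ρ / ρ| ≤ K / (σ + 1) * ρ ^ σ := by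
  have hσ1 : (0:ℝ) < σ + 1 := by linarith [hσ.1]
  have h1 : ρ ^ (σ + 1) = ρ ^ σ * ρ := Real.rpow_add_one hρ.ne' σ
  rw [abs_div, abs_of_pos hρ, div_le_iff₀ hρ]
  calc |GG φ ρ| ≤ K * ρ ^ (σ + 1) / (σ + 1) := GG_bound hσ hK hφc hφb hρ
    _ = K / (σ + 1) * ρ ^ σ * ρ := by rw [h1]; ring

lemma GGdiv_int (hσ : σ ∈ Set.Ioo (1 / 2 : ℝ) 1) (hK : 0 ≤ K)
    (hφc : ContinuousOn φ (Set.Ioi 0))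
    (hφb : ∀ τ : ℝ, 0 < τ → |φ τ| ≤ K * τ ^ (σ - 1)) {r : ℝ} (hr : 0 < r) :
    IntervalIntegrable (fun ρ : ℝ => GG φ ρ / ρ) volume 0 r := by
  rw [intervalIntegrable_iff_integrableOn_Ioc_of_le hr.le]
  have hmeas : AEStronglyMeasurable (fun ρ : ℝ => GG φ ρ / ρ)
      (volume.restrict (Set.Ioc 0 r)) :=
    ((GG_cont hσ hK hφc hφb).mono Set.Ioc_subset_Ioi_self).aestronglyMeasurable
      measurableSet_Ioc
  have hg : IntegrableOn (fun ρ : ℝ => K / (σ + 1) * ρ ^ σ) (Set.Ioc 0 r) := by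
    have := (intervalIntegral.intervalIntegrable_rpow' (r := σ) (by linarith [hσ.1]) (a := 0)
      (b := r)).const_mul (K / (σ + 1))
    rwa [intervalIntegrable_iff_integrableOn_Ioc_of_le hr.le] at this
  refine hg.mono' hmeas ?_
  filter_upwards [ae_restrict_mem measurableSet_Ioc] with ρ hρ
  exact GGdiv_bound hσ hK hφc hφb hρ.1

lemma JJ_bound (hσ : σ ∈ Set.Ioo (1 / 2 : ℝ) 1) (hK : 0 ≤ K)
    (hφc : ContinuousOn φ (Set.Ioi 0))
    (hφb : ∀ τ : ℝ, 0 < τ → |φ τ| ≤ K * τ ^ (σ - 1)) {r : ℝ} (hr : 0 < r) :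
    |JJ φ r| ≤ K * r ^ (σ + 1) / (σ + 1) ^ 2 := by
  have hσ1 : (0:ℝ) < σ + 1 := by linarith [hσ.1]
  have h1 : ‖∫ ρ in (0:ℝ)..r, GG φ ρ / ρ‖ ≤ |∫ ρ in (0:ℝ)..r, K / (σ + 1) * ρ ^ σ| := by
    have hb : IntervalIntegrable (fun ρ : ℝ => K / (σ + 1) * ρ ^ σ) volume 0 r :=
      (intervalIntegral.intervalIntegrable_rpow' (r := σ) (a := 0) (b := r)
        (by linarith [hσ.1])).const_mul (K / (σ + 1))
    refine intervalIntegral.norm_integral_le_abs_of_norm_le ?_ hb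
    rw [Set.uIoc_of_le hr.le]
    filter_upwards [ae_restrict_mem measurableSet_Ioc] with ρ hρ
    exact GGdiv_bound hσ hK hφc hφb hρ.1
  rw [show ‖∫ ρ in (0:ℝ)..r, GG φ ρ / ρ‖ = |JJ φ r| from rfl] at h1
  have h2 : ∫ ρ in (0:ℝ)..r, K / (σ + 1) * ρ ^ σ = K * r ^ (σ + 1) / (σ + 1) ^ 2 := by
    rw [intervalIntegral.integral_const_mul, integral_rpow (Or.inl (by linarith [hσ.1]))]
    rw [Real.zero_rpow (by positivity)]
    have h0 : σ + 1 ≠ 0 := ne_of_gt hσ1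
    rw [sub_zero, eq_div_iff (by positivity)]
    field_simp
  rw [h2] at h1
  calc |JJ φ r| ≤ |K * r ^ (σ + 1) / (σ + 1) ^ 2| := h1
    _ = K * r ^ (σ + 1) / (σ + 1) ^ 2 := abs_of_nonneg (by positivity)

lemma JJ_deriv (hσ : σ ∈ Set.Ioo (1 / 2 : ℝ) 1) (hK : 0 ≤ K)
    (hφc : ContinuousOn φ (Set.Ioi 0))
    (hφb : ∀ τ : ℝ, 0 < τ → |φ τ| ≤ K * τ ^ (σ - 1)) {r : ℝ} (hr : 0 < r) :
    HasDerivAt (JJ φ) (GG φ r / r) r := by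
  refine intervalIntegral.integral_hasDerivAt_right (GGdiv_int hσ hK hφc hφb hr) ?_ ?_
  · exact AEStronglyMeasurable.stronglyMeasurableAtFilter_of_mem
      ((GG_cont hσ hK hφc hφb).aestronglyMeasurable measurableSet_Ioi)
      (isOpen_Ioi.mem_nhds hr)
  · exact (GG_cont hσ hK hφc hφb).continuousAt (isOpen_Ioi.mem_nhds hr)

lemma calJ_eq {r : ℝ} (hr : 0 ≤ r) : calJ φ r = JJ φ r := by
  unfold calJ JJ
  rw [intervalIntegral.integral_of_le hr]
  refine setIntegral_congr_fun measurableSet_Ioc (fun ρ hρ => ?_)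
  unfold GG
  rw [intervalIntegral.integral_of_le hρ.1.le]

end Aux

/-- For `σ ∈ (1/2,1)`, `K ≥ 0` and continuous `φ : (0,∞) → ℝ` with
`|φ(τ)| ≤ K τ^{σ−1}`, the function `u(x) = 𝒥[φ](|x|)` satisfies
`|u(x)| ≤ K|x|^{σ+1}/(σ+1)²`, `|∇u(x)| ≤ K|x|^σ/(σ+1)` and
`|∂²_{ij}u(x)| ≤ C K |x|^{σ−1}`, with `C = C(σ)`. -/
theorem statement_5 (σ : ℝ) (hσ : σ ∈ Set.Ioo (1 / 2 : ℝ) 1) :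
    ∃ C > (0 : ℝ), ∀ K : ℝ, 0 ≤ K → ∀ φ : ℝ → ℝ, ContinuousOn φ (Set.Ioi 0) →
      (∀ τ : ℝ, 0 < τ → |φ τ| ≤ K * τ ^ (σ - 1)) →
      ∀ x : E2, x ≠ 0 →
        |calJ φ ‖x‖| ≤ K * ‖x‖ ^ (σ + 1) / (σ + 1) ^ 2 ∧
        ‖gradient (fun z : E2 => calJ φ ‖z‖) x‖ ≤ K * ‖x‖ ^ σ / (σ + 1) ∧
        ∀ i j : Fin 2,
          |pd i (pd j (fun z : E2 => calJ φ ‖z‖)) x| ≤ C * K * ‖x‖ ^ (σ - 1) := by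
  have hσ1 : (0:ℝ) < σ + 1 := by linarith [hσ.1]
  refine ⟨4, by norm_num, ?_⟩
  intro K hK φ hφc hφb x hx
  have hr : 0 < ‖x‖ := norm_pos_iff.2 hx
  set r : ℝ := ‖x‖ with hrdef
  have hueq : (fun z : E2 => calJ φ ‖z‖) = fun z : E2 => JJ φ ‖z‖ :=
    funext fun z => calJ_eq (norm_nonneg z)
  -- the fderiv of u at any nonzero point
  have hU : ∀ y : E2, y ≠ 0 → HasFDerivAt (fun z : E2 => JJ φ ‖z‖)
      ((GG φ ‖y‖ / ‖y‖) • (‖y‖⁻¹ • innerSL ℝ y)) y := by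
    intro y hy
    have hry : 0 < ‖y‖ := norm_pos_iff.2 hy
    have := HasDerivAt.comp_hasFDerivAt (f := fun z : E2 => ‖z‖) y
      (JJ_deriv hσ hK hφc hφb hry) (norm_hasFDerivAt hy)
    simpa [Function.comp_def] using this
  refine ⟨?_, ?_, ?_⟩
  · rw [calJ_eq (norm_nonneg x)]
    exact JJ_bound hσ hK hφc hφb hr
  · rw [hueq]
    have hfd := (hU x hx).fderiv
    have hgr : gradient (fun z : E2 => JJ φ ‖z‖) x =
        (InnerProductSpace.toDual ℝ E2).symm (fderiv ℝ (fun z : E2 => JJ φ ‖z‖) x) := rfl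
    rw [hgr, LinearIsometryEquiv.norm_map, hfd]
    rw [norm_smul, norm_smul, innerSL_apply_norm]
    have e1 : ‖r⁻¹‖ * r = 1 := by
      rw [Real.norm_eq_abs, abs_inv, abs_of_pos hr, inv_mul_cancel₀ hr.ne']
    calc ‖GG φ r / r‖ * (‖r⁻¹‖ * r) = |GG φ r / r| := by
          rw [e1, mul_one, Real.norm_eq_abs]
      _ ≤ K / (σ + 1) * r ^ σ := GGdiv_bound hσ hK hφc hφb hr
      _ = K * r ^ σ / (σ + 1) := by ring
  · intro i j
    set w : E2 := EuclideanSpace.single j (1:ℝ) with hw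
    set e : E2 := EuclideanSpace.single i (1:ℝ) with he
    have hpd : ∀ y : E2, y ≠ 0 → pd j (fun z : E2 => calJ φ ‖z‖) y
        = GG φ ‖y‖ / ‖y‖ ^ 2 * (innerSL ℝ w y) := by
      intro y hy
      have hry : 0 < ‖y‖ := norm_pos_iff.2 hy
      unfold pd
      rw [hueq, (hU y hy).fderiv]
      simp only [ContinuousLinearMap.smul_apply, smul_eq_mul, innerSL_apply_apply]
      rw [real_inner_comm y w]
      have key : ∀ a c R : ℝ, R ≠ 0 → a / R * (R⁻¹ * c) = a / R ^ 2 * c := by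
        intro a c R hR
        rw [div_eq_mul_inv, div_eq_mul_inv, pow_two, mul_inv]
        ring
      exact key _ _ _ hry.ne'
    have hev : pd j (fun z : E2 => calJ φ ‖z‖) =ᶠ[nhds x]
        (fun y : E2 => GG φ ‖y‖ / ‖y‖ ^ 2 * (innerSL ℝ w y)) := by
      filter_upwards [isOpen_compl_singleton.mem_nhds hx] with y hy
      exact hpd y hy
    have hd : HasDerivAt (fun s : ℝ => GG φ s / s ^ 2)
        ((r * φ r * r ^ 2 - GG φ r * (2 * r)) / r ^ 4) r := by
      have h := (GG_deriv hσ hK hφc hφb hr).div (hasDerivAt_pow 2 r) (by positivity)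
      refine h.congr_deriv ?_
      push_cast
      ring
    have hc : HasFDerivAt (fun y : E2 => GG φ ‖y‖ / ‖y‖ ^ 2)
        (((r * φ r * r ^ 2 - GG φ r * (2 * r)) / r ^ 4) • (r⁻¹ • innerSL ℝ x)) x := by
      have := HasDerivAt.comp_hasFDerivAt (f := fun z : E2 => ‖z‖) x hd (norm_hasFDerivAt hx)
      simpa [Function.comp_def] using this
    have hdw : HasFDerivAt (fun y : E2 => (innerSL ℝ w) y) (innerSL ℝ w) x :=
      (innerSL ℝ w).hasFDerivAt
    have hv := hc.mul hdw
    have hval : pd i (pd j (fun z : E2 => calJ φ ‖z‖)) x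
        = GG φ r / r ^ 2 * ⟪w, e⟫ +
          ⟪w, x⟫ * ((r * φ r * r ^ 2 - GG φ r * (2 * r)) / r ^ 4 * (r⁻¹ * ⟪x, e⟫)) := by
      show fderiv ℝ (pd j (fun z : E2 => calJ φ ‖z‖)) x e = _
      rw [hev.fderiv_eq, show (fun y : E2 => GG φ ‖y‖ / ‖y‖ ^ 2 * (innerSL ℝ w) y) =
        ((fun y : E2 => GG φ ‖y‖ / ‖y‖ ^ 2) * fun y : E2 => (innerSL ℝ w) y) from rfl, hv.fderiv]
      simp [ContinuousLinearMap.add_apply, ContinuousLinearMap.smul_apply, innerSL_apply_apply,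
        smul_eq_mul]
      exact Or.inl rfl
    -- bounds
    set p : ℝ := r ^ (σ - 1) with hpdef
    have hp : 0 < p := Real.rpow_pos_of_pos hr _
    have hrσ : r ^ σ = p * r := by
      rw [hpdef, ← Real.rpow_add_one hr.ne' (σ - 1)]; ring_nf
    have hrσ1 : r ^ (σ + 1) = p * r ^ 2 := by
      rw [Real.rpow_add_one hr.ne' σ, hrσ]; ring
    have hGb : |GG φ r| ≤ K * (p * r ^ 2) / (σ + 1) := by
      have := GG_bound hσ hK hφc hφb hr
      rwa [hrσ1] at this
    have hφr : |φ r| ≤ K * p := hφb r hr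
    have hwe : |⟪w, e⟫| ≤ 1 := by
      have := abs_real_inner_le_norm w e
      simp only [hw, he, EuclideanSpace.norm_single, norm_one, mul_one] at this
      exact this
    have hwx : |⟪w, x⟫| ≤ r := by
      have := abs_real_inner_le_norm w x
      simpa [hw, EuclideanSpace.norm_single] using this
    have hxe : |⟪x, e⟫| ≤ r := by
      have := abs_real_inner_le_norm x e
      simpa [he, EuclideanSpace.norm_single] using this
    have hA : |GG φ r / r ^ 2| ≤ K * p := by
      rw [abs_div, abs_of_pos (by positivity : (0:ℝ) < r ^ 2), div_le_iff₀ (by positivity)]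
      calc |GG φ r| ≤ K * (p * r ^ 2) / (σ + 1) := hGb
        _ ≤ K * (p * r ^ 2) := by
            apply div_le_self (by positivity)
            linarith [hσ.1]
        _ = K * p * r ^ 2 := by ring
    have hKp : 0 ≤ K * p := mul_nonneg hK hp.le
    have hnum : |r * φ r * r ^ 2 - GG φ r * (2 * r)| ≤ 3 * K * p * r ^ 3 := by
      calc |r * φ r * r ^ 2 - GG φ r * (2 * r)|
          ≤ |r * φ r * r ^ 2| + |GG φ r * (2 * r)| := abs_sub _ _
        _ = r ^ 3 * |φ r| + |GG φ r| * (2 * r) := by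
            rw [abs_mul, abs_mul, abs_mul, abs_of_pos hr,
              abs_of_pos (by positivity : (0:ℝ) < r ^ 2),
              abs_of_pos (by positivity : (0:ℝ) < 2 * r)]
            ring
        _ ≤ r ^ 3 * (K * p) + (K * (p * r ^ 2)) * (2 * r) := by
            gcongr
            exact hGb.trans (div_le_self (by positivity) (by linarith [hσ.1]))
        _ = 3 * K * p * r ^ 3 := by ring
    have hD : |(r * φ r * r ^ 2 - GG φ r * (2 * r)) / r ^ 4| ≤ 3 * K * p / r := by
      rw [abs_div, abs_of_pos (by positivity : (0:ℝ) < r ^ 4),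
        div_le_div_iff₀ (by positivity) hr]
      calc |r * φ r * r ^ 2 - GG φ r * (2 * r)| * r ≤ 3 * K * p * r ^ 3 * r :=
            mul_le_mul_of_nonneg_right hnum hr.le
        _ = 3 * K * p * r ^ 4 := by ring
    have hfinal : |pd i (pd j (fun z : E2 => calJ φ ‖z‖)) x| ≤ 4 * K * p := by
      rw [hval]
      calc |GG φ r / r ^ 2 * ⟪w, e⟫ +
            ⟪w, x⟫ * ((r * φ r * r ^ 2 - GG φ r * (2 * r)) / r ^ 4 * (r⁻¹ * ⟪x, e⟫))|
          ≤ |GG φ r / r ^ 2| * |⟪w, e⟫| +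
            |⟪w, x⟫| * (|(r * φ r * r ^ 2 - GG φ r * (2 * r)) / r ^ 4| * (r⁻¹ * |⟪x, e⟫|)) := by
            refine (abs_add_le _ _).trans ?_
            simp only [abs_mul, abs_inv, abs_of_pos hr]
            exact le_rfl
        _ ≤ (K * p) * 1 + r * ((3 * K * p / r) * (r⁻¹ * r)) := by
            have h3 : (0:ℝ) ≤ 3 * K * p / r := div_nonneg (by linarith) hr.le
            have t1 : |GG φ r / r ^ 2| * |⟪w, e⟫| ≤ (K * p) * 1 :=
              mul_le_mul hA hwe (abs_nonneg _) (by linarith)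
            have i2 : r⁻¹ * |⟪x, e⟫| ≤ r⁻¹ * r :=
              mul_le_mul_of_nonneg_left hxe (by positivity)
            have t2a : |(r * φ r * r ^ 2 - GG φ r * (2 * r)) / r ^ 4| * (r⁻¹ * |⟪x, e⟫|)
                ≤ (3 * K * p / r) * (r⁻¹ * r) :=
              mul_le_mul hD i2 (by positivity) h3
            have t2 : |⟪w, x⟫| * (|(r * φ r * r ^ 2 - GG φ r * (2 * r)) / r ^ 4|
                * (r⁻¹ * |⟪x, e⟫|)) ≤ r * ((3 * K * p / r) * (r⁻¹ * r)) :=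
              mul_le_mul hwx t2a (by positivity) hr.le
            exact add_le_add t1 t2
        _ = K * p + 3 * K * p := by field_simp
        _ ≤ 4 * K * p := by nlinarith [hp.le]
    calc |pd i (pd j (fun z : E2 => calJ φ ‖z‖)) x| ≤ 4 * K * p := hfinal
      _ = 4 * K * r ^ (σ - 1) := by rw [hpdef]
end
end

section
/- Let σ ∈ (1/2, 1), K ≥ 0, and let φ : (0, ∞) → ℝ be continuous with |φ(τ)| ≤ K·τ^{σ−1} for all τ > 0. Suppose v : (0, ∞) → ℝ is twice continuously differentiable, the radial function u(x) := v(|x|) satisfies Δu(x) = φ(|x|) for all x ∈ ℝ² \ {0}, and ∇u ∈ L^p(B₁(0)) for some p ∈ (2, ∞]. Then there is a constant c ∈ ℝ such that v(r) = 𝒥[φ](r) + c for all r > 0. -/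
open MeasureTheory
open scoped ENNReal

noncomputable section

section Aux

open Metric InnerProductSpace intervalIntegral

lemma hasFDerivAt_norm2 {y : E2} (hy : y ≠ 0) :
    HasFDerivAt (fun z : E2 => ‖z‖) (‖y‖⁻¹ • (innerSL ℝ y : E2 →L[ℝ] ℝ)) y := by
  have hny : ‖y‖ ≠ 0 := norm_ne_zero_iff.2 hy
  have h1 : HasFDerivAt (fun z : E2 => ‖z‖ ^ 2) (2 • (innerSL ℝ y : E2 →L[ℝ] ℝ)) y :=
    (hasStrictFDerivAt_norm_sq y).hasFDerivAt
  have h2 : HasDerivAt Real.sqrt (1 / (2 * Real.sqrt (‖y‖ ^ 2))) (‖y‖ ^ 2) :=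
    Real.hasDerivAt_sqrt (pow_ne_zero 2 hny)
  have h3 := h2.comp_hasFDerivAt y h1
  have hfun : (fun z : E2 => Real.sqrt (‖z‖ ^ 2)) = fun z : E2 => ‖z‖ :=
    funext fun z => Real.sqrt_sq (norm_nonneg z)
  rw [Function.comp_def, hfun] at h3
  have hEq : (1 / (2 * Real.sqrt (‖y‖ ^ 2))) • (2 • (innerSL ℝ y : E2 →L[ℝ] ℝ))
      = ‖y‖⁻¹ • (innerSL ℝ y : E2 →L[ℝ] ℝ) := by
    ext z
    simp only [ContinuousLinearMap.coe_smul', Pi.smul_apply, smul_eq_mul,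
      Real.sqrt_sq (norm_nonneg y)]
    field_simp
    ring
  rwa [hEq] at h3

lemma radial_hasFDerivAt {f : ℝ → ℝ} {f' : ℝ} {y : E2} (hy : y ≠ 0)
    (hf : HasDerivAt f f' ‖y‖) :
    HasFDerivAt (fun z : E2 => f ‖z‖) ((f' / ‖y‖) • (innerSL ℝ y : E2 →L[ℝ] ℝ)) y := by
  have h := hf.comp_hasFDerivAt y (hasFDerivAt_norm2 hy)
  have hEq : f' • ‖y‖⁻¹ • (innerSL ℝ y : E2 →L[ℝ] ℝ)
      = (f' / ‖y‖) • (innerSL ℝ y : E2 →L[ℝ] ℝ) := by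
    rw [smul_smul, div_eq_mul_inv]
  rwa [hEq] at h

lemma laplace_radial (v w : ℝ → ℝ) (hv : ∀ t : ℝ, 0 < t → HasDerivAt v (w t) t)
    (w' r : ℝ) (hr : 0 < r) (hw : HasDerivAt w w' r) :
    pd 0 (pd 0 (fun z : E2 => v ‖z‖)) (EuclideanSpace.single 0 r)
      + pd 1 (pd 1 (fun z : E2 => v ‖z‖)) (EuclideanSpace.single 0 r) = w' + w r / r := by
  set x₀ : E2 := EuclideanSpace.single 0 r with hx₀
  have hrne : r ≠ 0 := hr.ne'
  have hx₀norm : ‖x₀‖ = r := by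
    rw [hx₀, EuclideanSpace.norm_single, Real.norm_eq_abs, abs_of_pos hr]
  have hx₀ne : x₀ ≠ 0 := by
    intro h
    apply hrne
    rw [← hx₀norm, h, norm_zero]
  have hpd : ∀ i : Fin 2, ∀ y : E2, y ≠ 0 →
      (fderiv ℝ (fun z : E2 => v ‖z‖) y) (EuclideanSpace.single i 1) = w ‖y‖ * (‖y‖⁻¹ * y i) := by
    intro i y hy
    have h := radial_hasFDerivAt hy (hv ‖y‖ (norm_pos_iff.2 hy))
    rw [h.fderiv]
    simp only [ContinuousLinearMap.coe_smul', Pi.smul_apply, smul_eq_mul, innerSL_apply_apply]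
    rw [real_inner_comm, EuclideanSpace.inner_single_left]
    simp
    ring
  have key : ∀ i : Fin 2, pd i (pd i (fun z : E2 => v ‖z‖)) x₀
      = fderiv ℝ (fun y : E2 => w ‖y‖ * (‖y‖⁻¹ * y i)) x₀ (EuclideanSpace.single i 1) := by
    intro i
    unfold pd
    congr 1
    apply Filter.EventuallyEq.fderiv_eq
    have hmem : ({0}ᶜ : Set E2) ∈ nhds x₀ := isOpen_compl_singleton.mem_nhds hx₀ne
    filter_upwards [hmem] with y hy
    exact hpd i y hy
  have ha : HasFDerivAt (fun y : E2 => w ‖y‖) ((w' / r) • (innerSL ℝ x₀ : E2 →L[ℝ] ℝ)) x₀ := by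
    have := radial_hasFDerivAt hx₀ne (by rw [hx₀norm]; exact hw)
    rwa [hx₀norm] at this
  have hb : HasFDerivAt (fun y : E2 => ‖y‖⁻¹) ((-(r^2)⁻¹ / r) • (innerSL ℝ x₀ : E2 →L[ℝ] ℝ)) x₀ := by
    have hinv : HasDerivAt (fun t : ℝ => t⁻¹) (-(r^2)⁻¹) ‖x₀‖ := by
      rw [hx₀norm]; exact hasDerivAt_inv hrne
    have := radial_hasFDerivAt hx₀ne hinv
    rwa [hx₀norm] at this
  have hG : ∀ i : Fin 2, HasFDerivAt (fun y : E2 => w ‖y‖ * (‖y‖⁻¹ * y i))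
      ((w ‖x₀‖) • ((‖x₀‖⁻¹) • (EuclideanSpace.proj i : E2 →L[ℝ] ℝ)
          + (x₀ i) • ((-(r^2)⁻¹ / r) • (innerSL ℝ x₀ : E2 →L[ℝ] ℝ)))
        + (‖x₀‖⁻¹ * x₀ i) • ((w' / r) • (innerSL ℝ x₀ : E2 →L[ℝ] ℝ))) x₀ := by
    intro i
    have hc : HasFDerivAt (fun y : E2 => y i) (EuclideanSpace.proj i : E2 →L[ℝ] ℝ) x₀ :=
      (EuclideanSpace.proj i : E2 →L[ℝ] ℝ).hasFDerivAt
    have hbc := hb.mul hc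
    exact ha.mul hbc
  have hinner : ∀ i : Fin 2, (innerSL ℝ x₀ : E2 →L[ℝ] ℝ) (EuclideanSpace.single i 1) = x₀ i := by
    intro i
    rw [innerSL_apply_apply, real_inner_comm, EuclideanSpace.inner_single_left]
    simp
  have e0 : pd 0 (pd 0 (fun z : E2 => v ‖z‖)) x₀ = w' := by
    rw [key 0, (hG 0).fderiv]
    simp only [ContinuousLinearMap.add_apply, ContinuousLinearMap.coe_smul', Pi.smul_apply,
      smul_eq_mul, hinner 0]
    have h0 : x₀ (0 : Fin 2) = r := by simp [hx₀]
    rw [hx₀norm, h0]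
    simp only [PiLp.proj_apply, EuclideanSpace.single_apply, if_pos rfl, if_true]
    field_simp
    ring
  have e1 : pd 1 (pd 1 (fun z : E2 => v ‖z‖)) x₀ = w r / r := by
    rw [key 1, (hG 1).fderiv]
    simp only [ContinuousLinearMap.add_apply, ContinuousLinearMap.coe_smul', Pi.smul_apply,
      smul_eq_mul, hinner 1]
    have h1 : x₀ (1 : Fin 2) = 0 := by simp [hx₀]
    rw [hx₀norm, h1]
    simp only [PiLp.proj_apply, EuclideanSpace.single_apply, if_pos rfl, if_true]
    field_simp
    ring
  rw [e0, e1]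

lemma not_L2 (f : E2 → ℝ) (hf : IntegrableOn f (ball (0:E2) 1) volume)
    (hf0 : ∀ x, 0 ≤ f x) (m ε : ℝ) (hm : 0 < m) (hε : 0 < ε) (hε1 : ε ≤ 1)
    (hlow : ∀ x : E2, 0 < ‖x‖ → ‖x‖ < ε → m / ‖x‖ ^ 2 ≤ f x) : False := by
  set c : ℝ≥0∞ := volume (ball (0:E2) 1) with hc
  have hcfin : c ≠ ⊤ := measure_ball_lt_top.ne
  have hcr : 0 < c.toReal :=
    ENNReal.toReal_pos (measure_ball_pos _ _ one_pos).ne' hcfin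
  set ρ : ℕ → ℝ := fun k => ε / 2 ^ k with hρ
  have hρpos : ∀ k, 0 < ρ k := fun k => div_pos hε (by positivity)
  have hρle : ∀ k, ρ k ≤ ε := fun k => by
    rw [hρ]
    exact div_le_self hε.le (one_le_pow₀ (by norm_num))
  have hρanti : ∀ j k : ℕ, j ≤ k → ρ k ≤ ρ j := fun j k hjk => by
    apply div_le_div_of_nonneg_left hε.le (by positivity)
    exact pow_le_pow_right₀ (by norm_num) hjk
  have hρsucc : ∀ k, ρ (k + 1) = ρ k / 2 := fun k => by
    rw [hρ]; simp [pow_succ]; ring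
  set A : ℕ → Set E2 := fun k => ball (0:E2) (ρ k) \ ball (0:E2) (ρ (k+1)) with hA
  have hAsub : ∀ k, A k ⊆ ball (0:E2) 1 := fun k x hx =>
    mem_ball_zero_iff.2 (lt_of_lt_of_le (mem_ball_zero_iff.1 hx.1) ((hρle k).trans hε1))
  have hAmeas : ∀ k, MeasurableSet (A k) := fun k =>
    measurableSet_ball.diff measurableSet_ball
  have hAfin : ∀ k, volume (A k) ≠ ⊤ := fun k =>
    ((measure_mono (hAsub k)).trans_lt measure_ball_lt_top).ne
  have hballvol : ∀ s : ℝ, 0 ≤ s →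
      volume (ball (0:E2) s) = ENNReal.ofReal (s ^ 2) * c := by
    intro s hs
    rw [Measure.addHaar_ball _ _ hs, finrank_euclideanSpace_fin]
  have hAvol : ∀ k, (volume (A k)).toReal = (3/4) * ρ k ^ 2 * c.toReal := by
    intro k
    have hsub : ball (0:E2) (ρ (k+1)) ⊆ ball (0:E2) (ρ k) :=
      ball_subset_ball (hρanti k (k+1) (Nat.le_succ k))
    rw [hA]
    rw [measure_diff hsub measurableSet_ball.nullMeasurableSet measure_ball_lt_top.ne,
      hballvol _ (hρpos k).le, hballvol _ (hρpos (k+1)).le,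
      ENNReal.toReal_sub_of_le
        (mul_le_mul_left (ENNReal.ofReal_le_ofReal
          (by nlinarith [hρpos (k+1), hρanti k (k+1) (Nat.le_succ k)])) c)
        (ENNReal.mul_ne_top ENNReal.ofReal_ne_top hcfin),
      ENNReal.toReal_mul, ENNReal.toReal_mul, ENNReal.toReal_ofReal (by positivity),
      ENNReal.toReal_ofReal (by positivity), hρsucc k]
    ring
  set δ : ℝ := (3/4) * m * c.toReal with hδ
  have hδpos : 0 < δ := by positivity
  have hAint : ∀ k, IntegrableOn f (A k) volume := fun k => hf.mono_set (hAsub k)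
  have hannulus : ∀ k, δ ≤ ∫ x in A k, f x := by
    intro k
    have hconst : ∀ x ∈ A k, m / ρ k ^ 2 ≤ f x := by
      intro x hx
      have h1 : ‖x‖ < ρ k := mem_ball_zero_iff.1 hx.1
      have h2 : ρ (k+1) ≤ ‖x‖ := le_of_not_gt fun h => hx.2 (mem_ball_zero_iff.2 h)
      have hxpos : 0 < ‖x‖ := lt_of_lt_of_le (hρpos (k+1)) h2
      have := hlow x hxpos (h1.trans_le (hρle k))
      refine le_trans ?_ this
      apply div_le_div_of_nonneg_left hm.le (by positivity)
      nlinarith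
    have := setIntegral_ge_of_const_le_real (hAmeas k) (hAfin k) hconst (hAint k)
    refine le_trans ?_ this
    rw [measureReal_def, hAvol k, hδ]
    have : m / ρ k ^ 2 * (3/4 * ρ k ^ 2 * c.toReal)
        = 3/4 * m * c.toReal * (ρ k ^ 2 / ρ k ^ 2) := by ring
    rw [this, div_self (by positivity), mul_one]
  have hdisj : ∀ j k : ℕ, j < k → Disjoint (A j) (A k) := by
    intro j k hjk
    have h1 : A k ⊆ ball (0:E2) (ρ (j+1)) := fun x hx =>
      mem_ball_zero_iff.2 ((mem_ball_zero_iff.1 hx.1).trans_le (hρanti (j+1) k hjk))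
    exact (Set.disjoint_sdiff_left).mono_right h1
  have hsum : ∀ N : ℕ, (N : ℝ) * δ ≤ ∫ x in ball (0:E2) 1, f x := by
    intro N
    have hpair : Set.Pairwise ↑(Finset.range N) (Function.onFun Disjoint A) := by
      intro j _ k _ hjk
      rcases lt_or_gt_of_ne hjk with h | h
      · exact hdisj j k h
      · exact (hdisj k j h).symm
    have hUnion := integral_biUnion_finset (Finset.range N) (μ := volume) (f := f)
      (fun i _ => hAmeas i) hpair (fun i _ => hAint i)
    have hUsub : (⋃ i ∈ Finset.range N, A i) ⊆ ball (0:E2) 1 := by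
      intro x hx
      simp only [Set.mem_iUnion] at hx
      obtain ⟨i, _, hi⟩ := hx
      exact hAsub i hi
    have hle : ∫ x in ⋃ i ∈ Finset.range N, A i, f x ≤ ∫ x in ball (0:E2) 1, f x := by
      apply setIntegral_mono_set hf
      · exact Filter.Eventually.of_forall fun x => hf0 x
      · exact HasSubset.Subset.eventuallyLE hUsub
    calc (N : ℝ) * δ = ∑ _i ∈ Finset.range N, δ := by
          rw [Finset.sum_const, Finset.card_range, nsmul_eq_mul]
      _ ≤ ∑ i ∈ Finset.range N, ∫ x in A i, f x := Finset.sum_le_sum fun i _ => hannulus i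
      _ = ∫ x in ⋃ i ∈ Finset.range N, A i, f x := hUnion.symm
      _ ≤ _ := hle
  obtain ⟨N, hN⟩ := exists_nat_gt ((∫ x in ball (0:E2) 1, f x) / δ)
  have h2 := hsum N
  rw [← le_div_iff₀ hδpos] at h2
  exact absurd (hN.trans_le h2) (lt_irrefl _)

/-- FTC-1 for integrals over `Ioc 0 ·` of functions continuous on `(0,∞)`
and integrable near `0`. -/
lemma hasDerivAt_setIntegral_Ioc (f : ℝ → ℝ)
    (hint : ∀ b : ℝ, 0 < b → IntegrableOn f (Set.Ioc 0 b) volume)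
    (hcont : ContinuousOn f (Set.Ioi 0)) (r : ℝ) (hr : 0 < r) :
    HasDerivAt (fun s : ℝ => ∫ τ in Set.Ioc (0:ℝ) s, f τ) (f r) r := by
  have hsplit : ∀ s : ℝ, 0 < s → (∫ τ in Set.Ioc (0:ℝ) s, f τ)
      = (∫ τ in Set.Ioc (0:ℝ) r, f τ) + ∫ τ in r..s, f τ := by
    intro s hs
    rcases le_total r s with hrs | hsr
    · have hsp : (∫ τ in Set.Ioc (0:ℝ) s, f τ)
          = (∫ τ in Set.Ioc (0:ℝ) r, f τ) + ∫ τ in Set.Ioc r s, f τ := by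
        rw [← setIntegral_union (Set.Ioc_disjoint_Ioc_of_le le_rfl)
          measurableSet_Ioc ((hint s hs).mono_set (Set.Ioc_subset_Ioc_right hrs))
          ((hint s hs).mono_set (Set.Ioc_subset_Ioc_left hr.le)),
          Set.Ioc_union_Ioc_eq_Ioc hr.le hrs]
      rw [intervalIntegral.integral_of_le hrs]
      linarith
    · have hsp : (∫ τ in Set.Ioc (0:ℝ) r, f τ)
          = (∫ τ in Set.Ioc (0:ℝ) s, f τ) + ∫ τ in Set.Ioc s r, f τ := by
        rw [← setIntegral_union (Set.Ioc_disjoint_Ioc_of_le le_rfl)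
          measurableSet_Ioc ((hint r hr).mono_set (Set.Ioc_subset_Ioc_right hsr))
          ((hint r hr).mono_set (Set.Ioc_subset_Ioc_left hs.le)),
          Set.Ioc_union_Ioc_eq_Ioc hs.le hsr]
      rw [intervalIntegral.integral_symm, intervalIntegral.integral_of_le hsr]
      linarith
  have hii : IntervalIntegrable f volume r r := by
    apply ContinuousOn.intervalIntegrable
    apply hcont.mono
    intro t ht
    rw [Set.uIcc_self] at ht
    rw [Set.mem_singleton_iff.1 ht]
    exact hr
  have hF : HasDerivAt (fun s : ℝ => (∫ τ in Set.Ioc (0:ℝ) r, f τ) + ∫ τ in r..s, f τ)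
      (f r) r := by
    have h := intervalIntegral.integral_hasDerivAt_right hii
      (ContinuousOn.stronglyMeasurableAtFilter isOpen_Ioi hcont r hr)
      (hcont.continuousAt (isOpen_Ioi.mem_nhds hr))
    simpa using (h.const_add (∫ τ in Set.Ioc (0:ℝ) r, f τ))
  apply hF.congr_of_eventuallyEq
  filter_upwards [isOpen_Ioi.mem_nhds hr] with s hs
  exact hsplit s hs

end Aux

open Metric intervalIntegral

/-- Uniqueness for the radial Poisson equation: if `u(x) = v(|x|)` is
radial, `Δu = φ(|·|)` away from the origin, and `∇u ∈ Lᵖ(B₁(0))` for some `p ∈ (2,∞]`,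
then `v = 𝒥[φ] + c` on `(0,∞)` for some constant `c`. -/
theorem statement_6 (σ K : ℝ) (hσ : σ ∈ Set.Ioo (1 / 2 : ℝ) 1) (hK : 0 ≤ K)
    (φ : ℝ → ℝ) (hφc : ContinuousOn φ (Set.Ioi 0))
    (hφb : ∀ τ : ℝ, 0 < τ → |φ τ| ≤ K * τ ^ (σ - 1))
    (v : ℝ → ℝ) (hv : ContDiffOn ℝ 2 v (Set.Ioi 0))
    (hlap : ∀ x : E2, x ≠ 0 →
      pd 0 (pd 0 (fun z : E2 => v ‖z‖)) x + pd 1 (pd 1 (fun z : E2 => v ‖z‖)) x = φ ‖x‖)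
    (p : ℝ≥0∞) (hp : 2 < p)
    (hgrad : MemLp (gradient (fun z : E2 => v ‖z‖)) p
      (volume.restrict (Metric.ball (0 : E2) 1))) :
    ∃ c : ℝ, ∀ r : ℝ, 0 < r → v r = calJ φ r + c := by
  have hσ0 : 0 < σ := lt_trans (by norm_num) hσ.1
  have hσ1 : σ + 1 ≠ 0 := by positivity
  -- derivatives of v
  set w : ℝ → ℝ := deriv v with hw
  have hvd : ∀ t : ℝ, 0 < t → HasDerivAt v (w t) t := by
    intro t ht
    have hd : DifferentiableOn ℝ v (Set.Ioi 0) := hv.differentiableOn (by norm_num)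
    exact ((hd t ht).differentiableAt (isOpen_Ioi.mem_nhds ht)).hasDerivAt
  have hwcd : ContDiffOn ℝ 1 w (Set.Ioi 0) := by
    exact hv.deriv_of_isOpen isOpen_Ioi (by norm_num)
  have hwc : ContinuousOn w (Set.Ioi 0) := hwcd.continuousOn
  have hwd : ∀ t : ℝ, 0 < t → HasDerivAt w (deriv w t) t := by
    intro t ht
    have hd : DifferentiableOn ℝ w (Set.Ioi 0) := hwcd.differentiableOn (by norm_num)
    exact ((hd t ht).differentiableAt (isOpen_Ioi.mem_nhds ht)).hasDerivAt
  -- the ODE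
  have hODE : ∀ r : ℝ, 0 < r → deriv w r + w r / r = φ r := by
    intro r hr
    have hx₀ne : (EuclideanSpace.single 0 r : E2) ≠ 0 := by
      intro h
      have : ‖(EuclideanSpace.single 0 r : E2)‖ = r := by
        rw [EuclideanSpace.norm_single, Real.norm_eq_abs, abs_of_pos hr]
      rw [h, norm_zero] at this
      exact hr.ne this
    have h1 := hlap (EuclideanSpace.single 0 r) hx₀ne
    have h2 := laplace_radial v w hvd (deriv w r) r hr (hwd r hr)
    have h3 : ‖(EuclideanSpace.single 0 r : E2)‖ = r := by
      rw [EuclideanSpace.norm_single, Real.norm_eq_abs, abs_of_pos hr]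
    rw [h2, h3] at h1
    exact h1
  -- integrability facts
  have hbnd : ∀ (τ : ℝ), 0 < τ → ‖τ * φ τ‖ ≤ K * τ ^ σ := by
    intro τ hτ
    rw [Real.norm_eq_abs, abs_mul, abs_of_pos hτ]
    calc τ * |φ τ| ≤ τ * (K * τ ^ (σ - 1)) :=
          mul_le_mul_of_nonneg_left (hφb τ hτ) hτ.le
      _ = K * τ ^ σ := by
          rw [show σ = σ - 1 + 1 by ring, Real.rpow_add_one hτ.ne']
          ring
  have hmaj : ∀ b : ℝ, 0 < b → IntegrableOn (fun τ : ℝ => K * τ ^ σ) (Set.Ioc 0 b) volume := by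
    intro b hb
    have : IntervalIntegrable (fun τ : ℝ => τ ^ σ) volume 0 b :=
      intervalIntegral.intervalIntegrable_rpow' (by linarith)
    rw [intervalIntegrable_iff_integrableOn_Ioc_of_le hb.le] at this
    exact this.const_mul K
  have hφcont : ContinuousOn (fun τ : ℝ => τ * φ τ) (Set.Ioi 0) :=
    continuousOn_id.mul hφc
  have hint : ∀ b : ℝ, 0 < b → IntegrableOn (fun τ : ℝ => τ * φ τ) (Set.Ioc 0 b) volume := by
    intro b hb
    apply Integrable.mono' (hmaj b hb)
    · exact ContinuousOn.aestronglyMeasurable (hφcont.mono Set.Ioc_subset_Ioi_self)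
        measurableSet_Ioc
    · filter_upwards [ae_restrict_mem measurableSet_Ioc] with τ hτ
      exact hbnd τ hτ.1
  set Φ : ℝ → ℝ := fun s => ∫ τ in Set.Ioc (0:ℝ) s, τ * φ τ with hΦ
  have hΦbound : ∀ s : ℝ, 0 < s → |Φ s| ≤ K * s ^ (σ + 1) / (σ + 1) := by
    intro s hs
    have h1 : |Φ s| ≤ ∫ τ in Set.Ioc (0:ℝ) s, K * τ ^ σ := by
      rw [← Real.norm_eq_abs]
      refine (MeasureTheory.norm_integral_le_integral_norm _).trans ?_
      apply setIntegral_mono_on (hint s hs).norm (hmaj s hs) measurableSet_Ioc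
      intro τ hτ
      exact hbnd τ hτ.1
    refine h1.trans ?_
    rw [← intervalIntegral.integral_of_le hs.le, intervalIntegral.integral_const_mul,
      integral_rpow (Or.inl (by linarith))]
    rw [Real.zero_rpow hσ1, sub_zero, mul_div_assoc]
  -- g := r * v'(r)
  set g : ℝ → ℝ := fun t => t * w t with hg
  have hgd : ∀ t : ℝ, 0 < t → HasDerivAt g (t * φ t) t := by
    intro t ht
    have h1 := (hasDerivAt_id t).mul (hwd t ht)
    have h2 : t * deriv w t = t * φ t - w t := by
      have := hODE t ht
      field_simp at this ⊢
      linarith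
    have h1' : HasDerivAt (fun y : ℝ => y * w y) (1 * w t + t * deriv w t) t := by
      exact h1
    have h3 : 1 * w t + t * deriv w t = t * φ t := by rw [h2]; ring
    rw [hg]
    rwa [h3] at h1'
  have hgsub : ∀ s r : ℝ, 0 < s → 0 < r → g r - g s = ∫ t in s..r, t * φ t := by
    intro s r hs hr
    have hmin : ∀ t ∈ Set.uIcc s r, 0 < t := by
      intro t ht
      have := ht.1
      have hmin' : 0 < min s r := lt_min hs hr
      calc (0:ℝ) < min s r := hmin'
        _ ≤ t := by simpa using this
    rw [intervalIntegral.integral_eq_sub_of_hasDerivAt (fun t ht => hgd t (hmin t ht))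
      (ContinuousOn.intervalIntegrable (hφcont.mono fun t ht => hmin t ht))]
  have hΦsub : ∀ s r : ℝ, 0 < s → 0 < r → Φ r - Φ s = ∫ t in s..r, t * φ t := by
    intro s r hs hr
    have base : ∀ a b : ℝ, 0 < a → a ≤ b → Φ b - Φ a = ∫ t in a..b, t * φ t := by
      intro a b ha hab
      have hb : 0 < b := lt_of_lt_of_le ha hab
      rw [intervalIntegral.integral_of_le hab, hΦ]
      simp only
      rw [← Set.Ioc_union_Ioc_eq_Ioc ha.le hab, setIntegral_union (Set.Ioc_disjoint_Ioc_of_le le_rfl)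
        measurableSet_Ioc ((hint b hb).mono_set (Set.Ioc_subset_Ioc_right hab))
        ((hint b hb).mono_set (Set.Ioc_subset_Ioc_left ha.le))]
      ring
    rcases le_total s r with h | h
    · exact base s r hs h
    · have := base r s hr h
      rw [intervalIntegral.integral_symm]
      linarith
  set C : ℝ := g 1 - Φ 1 with hC
  have key : ∀ r : ℝ, 0 < r → g r = C + Φ r := by
    intro r hr
    have h1 := hgsub 1 r one_pos hr
    have h2 := hΦsub 1 r one_pos hr
    rw [hC]
    linarith
  -- C = 0 via the Lᵖ hypothesis
  have hC0 : C = 0 := by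
    by_contra hCne
    have habs : 0 < |C| := abs_pos.2 hCne
    -- find ε
    have htend : Filter.Tendsto (fun s : ℝ => K * s ^ (σ + 1) / (σ + 1))
        (nhdsWithin 0 (Set.Ioi 0)) (nhds 0) := by
      have h1 : Filter.Tendsto (fun s : ℝ => s ^ (σ + 1)) (nhds 0) (nhds 0) := by
        have := (Real.continuousAt_rpow_const 0 (σ + 1) (Or.inr (by positivity))).tendsto
        rwa [Real.zero_rpow hσ1] at this
      have h2 := (h1.const_mul K).div_const (σ + 1)
      simp only [mul_zero, zero_div] at h2
      exact h2.mono_left nhdsWithin_le_nhds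
    have hev : ∀ᶠ s in nhdsWithin 0 (Set.Ioi 0),
        K * s ^ (σ + 1) / (σ + 1) < |C| / 2 :=
      htend.eventually_lt_const (by positivity)
    have hev2 : ∀ᶠ s in nhdsWithin 0 (Set.Ioi 0), s ∈ Set.Ioo (0:ℝ) 1 :=
      Filter.eventually_of_mem (Ioo_mem_nhdsGT_of_mem (by norm_num : (0:ℝ) ∈ Set.Ico 0 1))
        (fun s hs => hs)
    obtain ⟨u, hu, husub⟩ := mem_nhdsGT_iff_exists_Ioo_subset.1 (hev.and hev2)
    set ε : ℝ := min u 1 with hε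
    have hεpos : 0 < ε := lt_min hu (by norm_num)
    have hε1 : ε ≤ 1 := min_le_right _ _
    have hgbound : ∀ s : ℝ, 0 < s → s < ε → |C| / 2 ≤ |g s| := by
      intro s hs hsε
      have hmem : s ∈ Set.Ioo (0:ℝ) u := ⟨hs, lt_of_lt_of_le hsε (min_le_left _ _)⟩
      obtain ⟨hlt, _⟩ := husub hmem
      have hΦs : |Φ s| < |C| / 2 := lt_of_le_of_lt (hΦbound s hs) hlt
      have := key s hs
      rw [this]
      have h6 : |C| ≤ |C + Φ s| + |Φ s| := by
        have h7 := abs_add_le (C + Φ s) (-(Φ s))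
        rw [abs_neg] at h7
        simpa using h7
      linarith
    -- gradient norm equals |w(|x|)|
    have hgradn : ∀ x : E2, x ≠ 0 →
        ‖gradient (fun z : E2 => v ‖z‖) x‖ = |w ‖x‖| := by
      intro x hx
      have hd := radial_hasFDerivAt hx (hvd ‖x‖ (norm_pos_iff.2 hx))
      unfold gradient
      rw [LinearIsometryEquiv.norm_map, hd.fderiv, norm_smul, innerSL_apply_norm,
        Real.norm_eq_abs, abs_div, abs_of_nonneg (norm_nonneg x),
        div_mul_cancel₀ _ (norm_ne_zero_iff.2 hx)]
    -- pass to L²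
    haveI : IsFiniteMeasure (volume.restrict (ball (0:E2) 1)) :=
      ⟨by rw [Measure.restrict_apply_univ]; exact measure_ball_lt_top⟩
    have h2 : MemLp (gradient (fun z : E2 => v ‖z‖)) 2
        (volume.restrict (ball (0:E2) 1)) := hgrad.mono_exponent hp.le
    have hint2 := h2.integrable_norm_rpow two_ne_zero ENNReal.ofNat_ne_top
    have hfeq : (fun x : E2 => ‖gradient (fun z : E2 => v ‖z‖) x‖ ^ (2:ℝ≥0∞).toReal)
        = fun x : E2 => ‖gradient (fun z : E2 => v ‖z‖) x‖ ^ 2 := by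
      funext x
      rw [show ((2:ℝ≥0∞)).toReal = ((2:ℕ):ℝ) by simp, Real.rpow_natCast]
    rw [hfeq] at hint2
    apply not_L2 (fun x : E2 => ‖gradient (fun z : E2 => v ‖z‖) x‖ ^ 2) hint2
      (fun x => sq_nonneg _) ((|C|/2)^2) ε (by positivity) hεpos hε1
    intro x hx hxε
    have hxne : x ≠ 0 := fun h => by rw [h, norm_zero] at hx; exact lt_irrefl _ hx
    rw [hgradn x hxne]
    have h3 : |C| / 2 ≤ |g ‖x‖| := hgbound ‖x‖ hx hxε
    have h4 : |g ‖x‖| = ‖x‖ * |w ‖x‖| := by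
      rw [hg]
      simp only
      rw [abs_mul, abs_of_pos hx]
    have h5 : |C| / 2 / ‖x‖ ≤ |w ‖x‖| := by
      rw [div_le_iff₀ hx]
      rw [h4] at h3
      linarith [h3]
    calc (|C|/2)^2 / ‖x‖^2 = (|C| / 2 / ‖x‖)^2 := by ring
      _ ≤ |w ‖x‖| ^ 2 := by
          apply pow_le_pow_left₀ (by positivity) h5
  -- conclude: w = Φ / id, integrate
  have hweq : ∀ t : ℝ, 0 < t → w t = Φ t / t := by
    intro t ht
    have := key t ht
    rw [hC0, zero_add, hg] at this
    simp only at this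
    field_simp
    linarith [this]
  -- continuity and integrability of ψ = Φ / id
  have hΦcont : ContinuousOn Φ (Set.Ioi 0) := by
    intro s hs
    exact (hasDerivAt_setIntegral_Ioc _ hint hφcont s hs).continuousAt.continuousWithinAt
  have hψcont : ContinuousOn (fun ρ : ℝ => Φ ρ / ρ) (Set.Ioi 0) :=
    hΦcont.div continuousOn_id (fun t ht => ne_of_gt ht)
  have hψbnd : ∀ ρ : ℝ, 0 < ρ → ‖Φ ρ / ρ‖ ≤ K / (σ + 1) * ρ ^ σ := by
    intro ρ hρ
    rw [Real.norm_eq_abs, abs_div, abs_of_pos hρ, div_le_iff₀ hρ]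
    calc |Φ ρ| ≤ K * ρ ^ (σ + 1) / (σ + 1) := hΦbound ρ hρ
      _ = K / (σ + 1) * ρ ^ σ * ρ := by
          rw [Real.rpow_add_one hρ.ne']
          ring
  have hψmaj : ∀ b : ℝ, 0 < b →
      IntegrableOn (fun τ : ℝ => K / (σ + 1) * τ ^ σ) (Set.Ioc 0 b) volume := by
    intro b hb
    have : IntervalIntegrable (fun τ : ℝ => τ ^ σ) volume 0 b :=
      intervalIntegral.intervalIntegrable_rpow' (by linarith)
    rw [intervalIntegrable_iff_integrableOn_Ioc_of_le hb.le] at this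
    exact this.const_mul _
  have hψint : ∀ b : ℝ, 0 < b →
      IntegrableOn (fun ρ : ℝ => Φ ρ / ρ) (Set.Ioc 0 b) volume := by
    intro b hb
    apply Integrable.mono' (hψmaj b hb)
    · exact ContinuousOn.aestronglyMeasurable (hψcont.mono Set.Ioc_subset_Ioi_self)
        measurableSet_Ioc
    · filter_upwards [ae_restrict_mem measurableSet_Ioc] with τ hτ
      exact hψbnd τ hτ.1
  have hJd : ∀ r : ℝ, 0 < r → HasDerivAt (calJ φ) (Φ r / r) r := by
    intro r hr
    have := hasDerivAt_setIntegral_Ioc (fun ρ : ℝ => Φ ρ / ρ) hψint hψcont r hr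
    exact this
  refine ⟨v 1 - calJ φ 1, ?_⟩
  intro r hr
  have hmin : ∀ t ∈ Set.uIcc 1 r, 0 < t := by
    intro t ht
    have := ht.1
    have hmin' : 0 < min 1 r := lt_min one_pos hr
    calc (0:ℝ) < min 1 r := hmin'
      _ ≤ t := by simpa using this
  have hder : ∀ t ∈ Set.uIcc 1 r,
      HasDerivAt (fun t => v t - calJ φ t) 0 t := by
    intro t ht
    have ht0 := hmin t ht
    have h1 := (hvd t ht0).sub (hJd t ht0)
    rwa [hweq t ht0, sub_self] at h1
  have hii : IntervalIntegrable (fun _ : ℝ => (0:ℝ)) volume 1 r :=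
    intervalIntegrable_const
  have := intervalIntegral.integral_eq_sub_of_hasDerivAt hder hii
  rw [intervalIntegral.integral_zero] at this
  have h2 : v r - calJ φ r = v 1 - calJ φ 1 := by linarith
  linarith
end
end

section
/- Let p ∈ (2, ∞). There is a constant C = C(p) such that for all s ∈ ℝ, y ∈ ℝ² and α ∈ ℝ²: |k^Lin_s(y) − k^Lin_s(y−α) − α·∇k^Lin_s(y)| ≤ C·|s|·|α|^{2−2/p}. -/
set_option synthInstance.maxHeartbeats 400000
set_option maxHeartbeats 1000000

open MeasureTheory
open scoped RealInnerProductSpace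

noncomputable section

/-- The solution `k^Lin_s` of the linearized self-similar Muskat profile equation. -/
def kLin (s : ℝ) (y : E2) : ℝ :=
  s * (Real.sqrt (‖y‖ ^ 2 + 1) - Real.log (Real.sqrt (‖y‖ ^ 2 + 1) + 1))

lemma sqrt_pos' (y : E2) : (0:ℝ) < Real.sqrt (‖y‖ ^ 2 + 1) :=
  Real.sqrt_pos.2 (by positivity)

lemma one_le_sqrt' (y : E2) : (1:ℝ) ≤ Real.sqrt (‖y‖ ^ 2 + 1) := by
  exact Real.le_sqrt_of_sq_le (by nlinarith [sq_nonneg ‖y‖])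

lemma norm_le_sqrt' (y : E2) : ‖y‖ ≤ Real.sqrt (‖y‖ ^ 2 + 1) := by
  exact Real.le_sqrt_of_sq_le (by linarith)

lemma sqrt_lip (z y : E2) :
    |Real.sqrt (‖z‖ ^ 2 + 1) - Real.sqrt (‖y‖ ^ 2 + 1)| ≤ ‖z - y‖ := by
  set a := ‖z‖; set b := ‖y‖
  set A := Real.sqrt (a ^ 2 + 1); set B := Real.sqrt (b ^ 2 + 1)
  have hA : A ^ 2 = a ^ 2 + 1 := Real.sq_sqrt (by positivity)
  have hB : B ^ 2 = b ^ 2 + 1 := Real.sq_sqrt (by positivity)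
  have hA1 : 1 ≤ A := one_le_sqrt' z
  have hB1 : 1 ≤ B := one_le_sqrt' y
  have haA : a ≤ A := norm_le_sqrt' z
  have hbB : b ≤ B := norm_le_sqrt' y
  have hab : |a - b| ≤ ‖z - y‖ := abs_norm_sub_norm_le z y
  have ha : 0 ≤ a := norm_nonneg z
  have hb : 0 ≤ b := norm_nonneg y
  rw [abs_le] at hab ⊢
  constructor <;> nlinarith [sq_nonneg (A - B), sq_nonneg (A + B)]
lemma hasFDerivAt_kLin (s : ℝ) (y : E2) :
    HasFDerivAt (kLin s) ((s * (Real.sqrt (‖y‖ ^ 2 + 1) + 1)⁻¹) • innerSL ℝ y) y := by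
  set u := Real.sqrt (‖y‖ ^ 2 + 1) with hu
  have hupos : 0 < u := sqrt_pos' y
  have hsq : HasDerivAt (fun t : ℝ => Real.sqrt (t + 1)) (1 / (2 * u)) (‖y‖ ^ 2) := by
    have := (HasDerivAt.sqrt ((hasDerivAt_id (‖y‖ ^ 2)).add_const 1)
      (by positivity : ‖y‖ ^ 2 + 1 ≠ 0))
    simpa using this
  have hlog : HasDerivAt (fun t : ℝ => Real.log (Real.sqrt (t + 1) + 1))
      ((1 / (2 * u)) / (u + 1)) (‖y‖ ^ 2) := by
    have := (hsq.add_const 1).log (by positivity : u + 1 ≠ 0)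
    simpa using this
  have hh : HasDerivAt (fun t : ℝ => Real.sqrt (t + 1) - Real.log (Real.sqrt (t + 1) + 1))
      ((2 * (u + 1))⁻¹) (‖y‖ ^ 2) := by
    have := hsq.sub hlog
    refine this.congr_deriv ?_
    field_simp
    ring
  have hns : HasFDerivAt (fun x : E2 => ‖x‖ ^ 2) (2 • (innerSL ℝ y)) y :=
    (hasStrictFDerivAt_norm_sq y).hasFDerivAt
  have hcomp := hh.comp_hasFDerivAt y hns
  have := hcomp.const_mul s
  have heq : (s • (2 * (u + 1))⁻¹ • 2 • (innerSL ℝ y)) = (s * (u + 1)⁻¹) • innerSL ℝ y := by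
    ext z
    have hne : u + 1 ≠ 0 := by positivity
    simp only [ContinuousLinearMap.smul_apply, smul_eq_mul]
    field_simp
    ring
  have h2 : HasFDerivAt (kLin s) (s • (2 * (u + 1))⁻¹ • 2 • (innerSL ℝ y)) y := this
  rwa [heq] at h2

lemma gradient_kLin (s : ℝ) (y : E2) :
    gradient (kLin s) y = (s * (Real.sqrt (‖y‖ ^ 2 + 1) + 1)⁻¹) • y := by
  apply HasGradientAt.gradient
  rw [hasGradientAt_iff_hasFDerivAt]
  have h := hasFDerivAt_kLin s y
  refine h.congr_fderiv ?_
  ext z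
  simp [InnerProductSpace.toDual_apply_apply, real_inner_smul_left]

lemma deriv_norm_le (s : ℝ) (z : E2) :
    ‖(s * (Real.sqrt (‖z‖ ^ 2 + 1) + 1)⁻¹) • innerSL ℝ z‖ ≤ |s| := by
  rw [norm_smul (s * (Real.sqrt (‖z‖ ^ 2 + 1) + 1)⁻¹) (innerSL ℝ z : E2 →L[ℝ] ℝ), innerSL_apply_norm]
  have h1 : (1:ℝ) ≤ Real.sqrt (‖z‖ ^ 2 + 1) + 1 := by linarith [Real.sqrt_nonneg (‖z‖ ^ 2 + 1)]
  have h2 : ‖z‖ ≤ Real.sqrt (‖z‖ ^ 2 + 1) + 1 := by linarith [norm_le_sqrt' z]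
  have h3 : 0 < Real.sqrt (‖z‖ ^ 2 + 1) + 1 := by linarith
  rw [norm_mul, Real.norm_eq_abs, Real.norm_eq_abs, abs_inv, abs_of_pos h3]
  calc |s| * (Real.sqrt (‖z‖ ^ 2 + 1) + 1)⁻¹ * ‖z‖
      ≤ |s| * (Real.sqrt (‖z‖ ^ 2 + 1) + 1)⁻¹ * (Real.sqrt (‖z‖ ^ 2 + 1) + 1) := by
        apply mul_le_mul_of_nonneg_left h2 (by positivity)
    _ = |s| := by field_simp

lemma deriv_lip (s : ℝ) (z y : E2) :
    ‖(s * (Real.sqrt (‖z‖ ^ 2 + 1) + 1)⁻¹) • innerSL ℝ z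
      - (s * (Real.sqrt (‖y‖ ^ 2 + 1) + 1)⁻¹) • innerSL ℝ y‖ ≤ 2 * |s| * ‖z - y‖ := by
  set uz := Real.sqrt (‖z‖ ^ 2 + 1) with huz
  set uy := Real.sqrt (‖y‖ ^ 2 + 1) with huy
  have hz1 : (1:ℝ) ≤ uz := one_le_sqrt' z
  have hy1 : (1:ℝ) ≤ uy := one_le_sqrt' y
  have hyb : ‖y‖ ≤ uy := norm_le_sqrt' y
  have hlip : |uz - uy| ≤ ‖z - y‖ := sqrt_lip z y
  set cz := s * (uz + 1)⁻¹
  set cy := s * (uy + 1)⁻¹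
  have key : cz • innerSL ℝ z - cy • innerSL ℝ y
      = cz • innerSL ℝ (z - y) + (cz - cy) • innerSL ℝ y := by
    rw [map_sub, smul_sub, sub_smul]
    abel
  rw [key]
  have h1 : ‖cz • innerSL ℝ (z - y)‖ ≤ |s| * ‖z - y‖ := by
    rw [norm_smul cz (innerSL ℝ (z - y) : E2 →L[ℝ] ℝ), innerSL_apply_norm, Real.norm_eq_abs]
    apply mul_le_mul_of_nonneg_right _ (norm_nonneg _)
    rw [abs_mul, abs_inv, abs_of_pos (by linarith : (0:ℝ) < uz + 1)]
    calc |s| * (uz + 1)⁻¹ ≤ |s| * 1 := by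
          apply mul_le_mul_of_nonneg_left _ (abs_nonneg s)
          rw [inv_le_one_iff₀]; right; linarith
      _ = |s| := mul_one _
  have h2 : ‖(cz - cy) • innerSL ℝ y‖ ≤ |s| * ‖z - y‖ := by
    rw [norm_smul (cz - cy) (innerSL ℝ y : E2 →L[ℝ] ℝ), innerSL_apply_norm, Real.norm_eq_abs]
    have hcc : |cz - cy| = |s| * |uy - uz| / ((uz + 1) * (uy + 1)) := by
      have : cz - cy = s * ((uy - uz) / ((uz + 1) * (uy + 1))) := by
        simp only [cz, cy]
        field_simp
        ring
      rw [this, abs_mul, abs_div, abs_of_pos (by nlinarith : (0:ℝ) < (uz + 1) * (uy + 1))]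
      ring
    rw [hcc]
    have hprod : (0:ℝ) < (uz + 1) * (uy + 1) := by nlinarith
    rw [div_mul_eq_mul_div, div_le_iff₀ hprod]
    have h4 : |uy - uz| ≤ ‖z - y‖ := by rw [abs_sub_comm]; exact hlip
    have h5 : ‖y‖ ≤ (uz + 1) * (uy + 1) := by nlinarith
    have h6 : |s| * |uy - uz| * ‖y‖ ≤ |s| * ‖z - y‖ * ‖y‖ := by
      apply mul_le_mul_of_nonneg_right _ (norm_nonneg y)
      exact mul_le_mul_of_nonneg_left h4 (abs_nonneg s)
    have h7 : |s| * ‖z - y‖ * ‖y‖ ≤ |s| * ‖z - y‖ * ((uz + 1) * (uy + 1)) :=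
      mul_le_mul_of_nonneg_left h5 (mul_nonneg (abs_nonneg s) (norm_nonneg _))
    linarith
  calc ‖cz • innerSL ℝ (z - y) + (cz - cy) • innerSL ℝ y‖
      ≤ ‖cz • innerSL ℝ (z - y)‖ + ‖(cz - cy) • innerSL ℝ y‖ := norm_add_le _ _
    _ ≤ |s| * ‖z - y‖ + |s| * ‖z - y‖ := add_le_add h1 h2
    _ = 2 * |s| * ‖z - y‖ := by ring

/-- For `p ∈ (2,∞)` there is `C = C(p)` with
`|k^Lin_s(y) − k^Lin_s(y−α) − α·∇k^Lin_s(y)| ≤ C |s| |α|^{2−2/p}` for all `s, y, α`. -/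
theorem statement_10 (p : ℝ) (hp : p ∈ Set.Ioi (2 : ℝ)) :
    ∃ C > (0 : ℝ), ∀ (s : ℝ) (y α : E2),
      |kLin s y - kLin s (y - α) - ⟪α, gradient (kLin s) y⟫| ≤
        C * |s| * ‖α‖ ^ (2 - 2 / p) := by
  have hp2 : (2:ℝ) < p := hp
  have hppos : (0:ℝ) < p := by linarith
  have he1 : (1:ℝ) < 2 - 2 / p := by
    have : 2 / p < 1 := (div_lt_one hppos).2 hp2
    linarith
  have he2 : 2 - 2 / p ≤ 2 := by
    have : 0 < 2 / p := by positivity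
    linarith
  refine ⟨2, by norm_num, fun s y α => ?_⟩
  set f' : E2 → (E2 →L[ℝ] ℝ) := fun z => (s * (Real.sqrt (‖z‖ ^ 2 + 1) + 1)⁻¹) • innerSL ℝ z
    with hf'
  have hder : ∀ z : E2, HasFDerivAt (kLin s) (f' z) z := fun z => hasFDerivAt_kLin s z
  have hinner : ⟪α, gradient (kLin s) y⟫ = f' y α := by
    rw [gradient_kLin]
    simp only [hf', ContinuousLinearMap.smul_apply, innerSL_apply_apply, smul_eq_mul]
    rw [real_inner_smul_right, real_inner_comm]
  have hfy : f' y (-α) = -(f' y α) := map_neg _ _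
  -- second-order bound
  have taylor : |kLin s y - kLin s (y - α) - ⟪α, gradient (kLin s) y⟫| ≤ 2 * |s| * ‖α‖ ^ 2 := by
    have hconv : Convex ℝ (Metric.closedBall y ‖α‖) := convex_closedBall _ _
    have hmem1 : y ∈ Metric.closedBall y ‖α‖ := Metric.mem_closedBall_self (norm_nonneg α)
    have hmem2 : y - α ∈ Metric.closedBall y ‖α‖ := by
      simp [Metric.mem_closedBall, dist_eq_norm]
    have hbound : ∀ z ∈ Metric.closedBall y ‖α‖, ‖f' z - f' y‖ ≤ 2 * |s| * ‖α‖ := by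
      intro z hz
      have hzy : ‖z - y‖ ≤ ‖α‖ := by
        rw [← dist_eq_norm]; exact Metric.mem_closedBall.1 hz
      calc ‖f' z - f' y‖ ≤ 2 * |s| * ‖z - y‖ := deriv_lip s z y
        _ ≤ 2 * |s| * ‖α‖ := by
            apply mul_le_mul_of_nonneg_left hzy (by positivity)
    have hmvt := hconv.norm_image_sub_le_of_norm_hasFDerivWithin_le'
      (fun z _ => (hder z).hasFDerivWithinAt) hbound hmem1 hmem2
    rw [hinner]
    have h1 : y - α - y = -α := by abel
    rw [h1, hfy, norm_neg] at hmvt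
    have h2 : |kLin s y - kLin s (y - α) - f' y α|
        = ‖kLin s (y - α) - kLin s y - -(f' y α)‖ := by
      rw [Real.norm_eq_abs, ← abs_neg]; congr 1; ring
    rw [h2]
    calc ‖kLin s (y - α) - kLin s y - -(f' y α)‖ ≤ 2 * |s| * ‖α‖ * ‖α‖ := hmvt
      _ = 2 * |s| * ‖α‖ ^ 2 := by ring
  -- first-order bound
  have lip : |kLin s y - kLin s (y - α) - ⟪α, gradient (kLin s) y⟫| ≤ 2 * |s| * ‖α‖ := by
    have hb : ∀ z ∈ (Set.univ : Set E2), ‖f' z‖ ≤ |s| := fun z _ => deriv_norm_le s z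
    have hl := convex_univ.norm_image_sub_le_of_norm_hasFDerivWithin_le
      (fun z _ => (hder z).hasFDerivWithinAt) hb (Set.mem_univ (y - α)) (Set.mem_univ y)
    have h3 : ‖y - (y - α)‖ = ‖α‖ := by congr 1; abel
    rw [h3] at hl
    have h4 : |⟪α, gradient (kLin s) y⟫| ≤ |s| * ‖α‖ := by
      rw [hinner]
      calc |f' y α| ≤ ‖f' y‖ * ‖α‖ := (f' y).le_opNorm α
        _ ≤ |s| * ‖α‖ := mul_le_mul_of_nonneg_right (deriv_norm_le s y) (norm_nonneg α)
    have h5 : |kLin s y - kLin s (y - α)| ≤ |s| * ‖α‖ := hl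
    calc |kLin s y - kLin s (y - α) - ⟪α, gradient (kLin s) y⟫|
        ≤ |kLin s y - kLin s (y - α)| + |⟪α, gradient (kLin s) y⟫| := abs_sub _ _
      _ ≤ |s| * ‖α‖ + |s| * ‖α‖ := add_le_add h5 h4
      _ = 2 * |s| * ‖α‖ := by ring
  rcases le_or_gt ‖α‖ 1 with hsmall | hbig
  · have hpow : ‖α‖ ^ 2 ≤ ‖α‖ ^ (2 - 2 / p) := by
      rcases eq_or_lt_of_le (norm_nonneg α) with h0 | h0
      · rw [← h0]
        rw [show ((0:ℝ) ^ 2 : ℝ) = 0 by norm_num, Real.zero_rpow (by linarith)]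
      · rw [show (‖α‖ ^ 2 : ℝ) = ‖α‖ ^ ((2:ℕ) : ℝ) by rw [Real.rpow_natCast]]
        exact Real.rpow_le_rpow_of_exponent_ge h0 hsmall (by push_cast; linarith)
    calc |kLin s y - kLin s (y - α) - ⟪α, gradient (kLin s) y⟫|
        ≤ 2 * |s| * ‖α‖ ^ 2 := taylor
      _ ≤ 2 * |s| * ‖α‖ ^ (2 - 2 / p) := mul_le_mul_of_nonneg_left hpow (by positivity)
  · have hpow : ‖α‖ ≤ ‖α‖ ^ (2 - 2 / p) := by
      calc ‖α‖ = ‖α‖ ^ (1:ℝ) := (Real.rpow_one _).symm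
        _ ≤ ‖α‖ ^ (2 - 2 / p) :=
          Real.rpow_le_rpow_of_exponent_le (le_of_lt hbig) (by linarith)
    calc |kLin s y - kLin s (y - α) - ⟪α, gradient (kLin s) y⟫|
        ≤ 2 * |s| * ‖α‖ := lip
      _ ≤ 2 * |s| * ‖α‖ ^ (2 - 2 / p) := mul_le_mul_of_nonneg_left hpow (by positivity)
end
end

section
/- There is an absolute constant C such that for all s ∈ ℝ, y ∈ ℝ² and α ∈ ℝ² with α ≠ 0: |(Δ_α k^Lin_s(y))² − (Δ_{−α} k^Lin_s(y))²| ≤ C·s²·( 1_{|α| ≤ |y|/2} · ( |y||α|/(|y|²+|α|²+1) + |y|/(|α|·√(|y|²+|α|²+1)) ) + 1_{|α| ≥ |y|/2} · |y|/√(|y|²+|α|²+1) ). -/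
lemma hdiff_bounds {u v : ℝ} (hv : 0 ≤ v) (huv : v ≤ u) :
    0 ≤ (u - Real.log (u+1)) - (v - Real.log (v+1)) ∧
    (u - Real.log (u+1)) - (v - Real.log (v+1)) ≤ (u - v) * u / (u + 1) := by
  have hv1 : (0:ℝ) < v + 1 := by linarith
  have hu1 : (0:ℝ) < u + 1 := by linarith
  have hlog : Real.log (u+1) - Real.log (v+1) = Real.log ((u+1)/(v+1)) :=
    (Real.log_div hu1.ne' hv1.ne').symm
  have hup : Real.log ((u+1)/(v+1)) ≤ (u+1)/(v+1) - 1 :=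
    Real.log_le_sub_one_of_pos (by positivity)
  have hlo : Real.log ((v+1)/(u+1)) ≤ (v+1)/(u+1) - 1 :=
    Real.log_le_sub_one_of_pos (by positivity)
  have hneg : Real.log ((v+1)/(u+1)) = - Real.log ((u+1)/(v+1)) := by
    rw [Real.log_div hv1.ne' hu1.ne', Real.log_div hu1.ne' hv1.ne']; ring
  rw [hneg] at hlo
  have e1 : (u+1)/(v+1) - 1 = (u-v)/(v+1) := by field_simp; ring
  have e2 : (v+1)/(u+1) - 1 = -((u-v)/(u+1)) := by field_simp; ring
  rw [e1] at hup; rw [e2] at hlo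
  have h3 : (u-v)/(v+1) ≤ u - v := by
    rw [div_le_iff₀ hv1]; nlinarith
  have e3 : (u-v) - (u-v)/(u+1) = (u-v)*u/(u+1) := by field_simp; ring
  constructor
  · linarith
  · have : (u-v)/(u+1) ≤ Real.log (u+1) - Real.log (v+1) := by rw [hlog]; linarith
    linarith [e3 ▸ (by linarith [this] : (u-v) - (Real.log (u+1) - Real.log (v+1)) ≤ (u-v) - (u-v)/(u+1))]

lemma habs_h {u v : ℝ} (hu : 0 ≤ u) (hv : 0 ≤ v) :
    |(u - Real.log (u+1)) - (v - Real.log (v+1))| ≤ |u - v| := by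
  rcases le_total v u with h | h
  · obtain ⟨h0, h1⟩ := hdiff_bounds hv h
    rw [abs_of_nonneg h0, abs_of_nonneg (by linarith)]
    calc (u - Real.log (u+1)) - (v - Real.log (v+1)) ≤ (u-v)*u/(u+1) := h1
      _ ≤ u - v := by rw [div_le_iff₀ (by linarith)]; nlinarith
  · obtain ⟨h0, h1⟩ := hdiff_bounds hu h
    rw [abs_sub_comm, abs_sub_comm u v, abs_of_nonneg h0, abs_of_nonneg (by linarith)]
    calc (v - Real.log (v+1)) - (u - Real.log (u+1)) ≤ (v-u)*v/(v+1) := h1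
      _ ≤ v - u := by rw [div_le_iff₀ (by linarith)]; nlinarith

lemma sqrt_lip_s11 {a b : ℝ} (ha : 0 ≤ a) (hb : 0 ≤ b) :
    |Real.sqrt (a^2+1) - Real.sqrt (b^2+1)| ≤ |a - b| := by
  have h1 : Real.sqrt (a^2+1) ^ 2 = a^2+1 := Real.sq_sqrt (by positivity)
  have h2 : Real.sqrt (b^2+1) ^ 2 = b^2+1 := Real.sq_sqrt (by positivity)
  have ha' : a ≤ Real.sqrt (a^2+1) := by nlinarith [Real.sqrt_nonneg (a^2+1)]
  have hb' : b ≤ Real.sqrt (b^2+1) := by nlinarith [Real.sqrt_nonneg (b^2+1)]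
  rw [abs_le]
  constructor <;>
    nlinarith [le_abs_self (a-b), neg_abs_le (a-b), Real.sqrt_nonneg (a^2+1),
      Real.sqrt_nonneg (b^2+1), abs_nonneg (a-b), sq_nonneg (a-b), sq_nonneg (a+b)]

lemma one_le_sqrt_sq_add_one {a : ℝ} : 1 ≤ Real.sqrt (a^2+1) := by
  have h1 : Real.sqrt (a^2+1) ^ 2 = a^2+1 := Real.sq_sqrt (by positivity)
  nlinarith [Real.sqrt_nonneg (a^2+1)]

lemma diff_bound2 {r0 t v w sD : ℝ}
    (hv : 1 ≤ v) (hw : 1 ≤ w) (hvw : v ≤ w) (hsD : 1 ≤ sD) (hsDw : sD ≤ w)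
    (hkey : (w - v)*(v + w) ≤ 4*(r0*t)) :
    (w - Real.log (w+1)) - (v - Real.log (v+1)) ≤ 4*(r0*t)/sD := by
  obtain ⟨h0, h1⟩ := hdiff_bounds (by linarith) hvw
  refine h1.trans ?_
  rw [div_le_div_iff₀ (by linarith) (by linarith)]
  nlinarith [mul_le_mul_of_nonneg_right hkey (by linarith : (0:ℝ) ≤ w+1),
    mul_nonneg (mul_nonneg (sub_nonneg.2 hvw) (by linarith : (0:ℝ) ≤ v)) (by linarith : (0:ℝ) ≤ w+1),
    mul_nonneg (mul_nonneg (sub_nonneg.2 hvw) (by linarith : (0:ℝ) ≤ w)) (by linarith : (0:ℝ) ≤ w + 1 - sD)]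

/-- bound for `log P - log Q`. -/
lemma log_ratio_bound {P Q t sD : ℝ} (hP : 0 < P) (hQ : 0 < Q) (hsD : 1 ≤ sD)
    (hPQ : P - Q ≤ 4*t^2) (hQlo : 2/5*sD^2 ≤ Q) :
    Real.log P - Real.log Q ≤ 10*t^2/sD := by
  have h1 : Real.log P - Real.log Q = Real.log (P/Q) := (Real.log_div hP.ne' hQ.ne').symm
  have h2 := Real.log_le_sub_one_of_pos (show (0:ℝ) < P/Q by positivity)
  have h3 : P/Q - 1 = (P - Q)/Q := by field_simp
  rw [h1]; rw [h3] at h2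
  refine h2.trans ?_
  rw [div_le_div_iff₀ hQ (by linarith : (0:ℝ) < sD)]
  rcases le_or_gt (P - Q) 0 with h | h
  · nlinarith [sq_nonneg t, mul_nonneg (mul_nonneg (by norm_num : (0:ℝ) ≤ 10) (sq_nonneg t)) hQ.le]
  · nlinarith [mul_le_mul_of_nonneg_right hPQ (by linarith : (0:ℝ) ≤ sD),
      mul_nonneg (sq_nonneg t) (by nlinarith : (0:ℝ) ≤ sD^2 - sD)]

set_option maxHeartbeats 1000000 in
/-- Near-region bound on the symmetric second difference of `h∘u`. -/
lemma near_sum_bound {t r0 r1 r2 u0 u1 u2 sD : ℝ} (ht : 0 < t) (hr0 : 0 ≤ r0)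
    (hu0 : 1 ≤ u0) (hu1 : 1 ≤ u1) (hu2 : 1 ≤ u2) (hsD : 1 ≤ sD)
    (hu0sq : u0^2 = r0^2+1) (hu1sq : u1^2 = r1^2+1) (hu2sq : u2^2 = r2^2+1)
    (hsDsq : sD^2 = r0^2+t^2+1)
    (hpar : r1^2 + r2^2 = 2*r0^2 + 2*t^2)
    (hprod : (r0^2 - t^2)^2 ≤ r1^2 * r2^2)
    (hnear : t ≤ r0/2) :
    |((u0 - Real.log (u0+1)) - (u1 - Real.log (u1+1)))
      + ((u0 - Real.log (u0+1)) - (u2 - Real.log (u2+1)))| ≤ 14*t^2/sD := by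
  have hsD0 : (0:ℝ) < sD := by linarith
  have ht2 : t^2 ≤ r0^2/4 := by
    nlinarith [mul_le_mul hnear hnear ht.le (by linarith : (0:ℝ) ≤ r0/2)]
  have hu12sq : u1^2 + u2^2 = 2*u0^2 + 2*t^2 := by rw [hu1sq, hu2sq, hu0sq]; linarith
  have hpr_hi : u1*u2 ≤ u0^2 + t^2 := by nlinarith [sq_nonneg (u1-u2)]
  have hpr_lo : u0^2 - 2*t^2 ≤ u1*u2 := by
    have hsq : (u0^2 - 2*t^2)^2 ≤ (u1*u2)^2 := by
      have expand : (u1*u2)^2 = r1^2*r2^2 + (r1^2 + r2^2) + 1 := by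
        rw [mul_pow, hu1sq, hu2sq]; ring
      have key4 : (r0^2+1-2*t^2)^2 ≤ (r0^2-t^2)^2 + 2*r0^2+2*t^2+1 := by
        nlinarith [mul_le_mul_of_nonneg_left ht2 (sq_nonneg t)]
      rw [expand, hu0sq]
      linarith [hprod]
    have h5 := Real.sqrt_le_sqrt hsq
    rw [Real.sqrt_sq_eq_abs, Real.sqrt_sq_eq_abs] at h5
    have h6 : (0:ℝ) < u1*u2 := mul_pos (by linarith) (by linarith)
    calc u0^2-2*t^2 ≤ |u0^2-2*t^2| := le_abs_self _
      _ ≤ |u1*u2| := h5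
      _ = u1*u2 := abs_of_pos h6
  have e1 : (2*u0 - u1 - u2) * (2*u0 + u1 + u2) = 2*(u0^2 - t^2 - u1*u2) := by
    linear_combination -hu12sq
  have hsD2u0 : sD ≤ 2*u0 := by
    nlinarith [sq_nonneg (sD - 2*u0), hsD0, ht2, hu0sq, hsDsq]
  have hS_sD_hi : 2*u0 - u1 - u2 ≤ 4*t^2/sD := by
    rw [le_div_iff₀ hsD0]
    rcases le_or_gt (2*u0 - u1 - u2) 0 with h | h
    · have h9 : (2*u0 - u1 - u2)*sD ≤ 0 :=
        mul_nonpos_iff.mpr (Or.inr ⟨h, hsD0.le⟩)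
      linarith [sq_nonneg t]
    · linarith [mul_le_mul_of_nonneg_left hsD2u0 h.le,
        mul_nonneg h.le (by linarith : (0:ℝ) ≤ u1 + u2), e1, hpr_lo]
  have hS_sD_lo : u1 + u2 - 2*u0 ≤ 4*t^2/sD := by
    rw [le_div_iff₀ hsD0]
    rcases le_or_gt (u1 + u2 - 2*u0) 0 with h | h
    · have h9 : (u1 + u2 - 2*u0)*sD ≤ 0 :=
        mul_nonpos_iff.mpr (Or.inr ⟨h, hsD0.le⟩)
      linarith [sq_nonneg t]
    · linarith [mul_le_mul_of_nonneg_left hsD2u0 h.le,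
        mul_nonneg h.le (by linarith : (0:ℝ) ≤ u1 + u2), e1, hpr_hi]
  have hP : (0:ℝ) < (u0+1)^2 := by positivity
  have hQ : (0:ℝ) < (u1+1)*(u2+1) := by positivity
  have hS_hi : 2*u0 - u1 - u2 ≤ t^2 := by
    rcases le_or_gt (2*u0 - u1 - u2) 0 with h | h
    · linarith [sq_nonneg t]
    · linarith [mul_nonneg h.le (by linarith : (0:ℝ) ≤ 2*u0 + u1 + u2 - 4), e1, hpr_lo]
  have hS_lo : u1 + u2 - 2*u0 ≤ 2*t^2 := by
    rcases le_or_gt (u1 + u2 - 2*u0) 0 with h | h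
    · linarith [sq_nonneg t]
    · linarith [mul_nonneg h.le (by linarith : (0:ℝ) ≤ 2*u0 + u1 + u2 - 4), e1, hpr_hi]
  have hPQ_hi : (u0+1)^2 - (u1+1)*(u2+1) ≤ 4*t^2 := by
    linarith [hpr_lo, hS_hi, sq_nonneg t]
  have hPQ_lo : (u1+1)*(u2+1) - (u0+1)^2 ≤ 4*t^2 := by
    linarith [hpr_hi, hS_lo, sq_nonneg t]
  have hQ_lo : 2/5*sD^2 ≤ (u1+1)*(u2+1) := by
    linarith [hpr_lo, ht2, hu0sq, hsDsq, hu1, hu2]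
  have hP_lo : 2/5*sD^2 ≤ (u0+1)^2 := by
    linarith [hu0sq, hsDsq, ht2, hu0]
  have hlog_hi := log_ratio_bound hP hQ hsD hPQ_hi hQ_lo
  have hlog_lo := log_ratio_bound hQ hP hsD hPQ_lo hP_lo
  have hlogP : Real.log ((u0+1)^2) = 2*Real.log (u0+1) := by
    rw [Real.log_pow]; push_cast; ring
  have hlogQ : Real.log ((u1+1)*(u2+1)) = Real.log (u1+1) + Real.log (u2+1) :=
    Real.log_mul (by linarith : (0:ℝ) < u1+1).ne' (by linarith : (0:ℝ) < u2+1).ne' 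
  have heq : ((u0 - Real.log (u0+1)) - (u1 - Real.log (u1+1)))
      + ((u0 - Real.log (u0+1)) - (u2 - Real.log (u2+1)))
      = (2*u0 - u1 - u2) - (Real.log ((u0+1)^2) - Real.log ((u1+1)*(u2+1))) := by
    rw [hlogP, hlogQ]; ring
  rw [heq, abs_le]
  have h4 : (14:ℝ)*t^2/sD = 4*t^2/sD + 10*t^2/sD := by ring
  constructor
  · linarith
  · linarith
noncomputable def gfun (r : ℝ) : ℝ := Real.sqrt (r^2+1) - Real.log (Real.sqrt (r^2+1)+1)

set_option maxHeartbeats 1000000 in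
lemma key (s t r0 r1 r2 : ℝ) (ht : 0 < t) (hr0 : 0 ≤ r0) (hr1 : 0 ≤ r1) (hr2 : 0 ≤ r2)
    (hpar : r1^2 + r2^2 = 2*r0^2 + 2*t^2)
    (hd21 : |r2^2 - r1^2| ≤ 4*(r0*t))
    (hprod : (r0^2 - t^2)^2 ≤ r1^2 * r2^2)
    (htri1 : |r0 - r1| ≤ t) (htri2 : |r0 - r2| ≤ t) :
    |(s * (gfun r0 - gfun r1) / t)^2 - (s * (gfun r0 - gfun r2) / t)^2| ≤
      100 * s^2 *
        ((if t ≤ r0/2 then r0*t/(r0^2+t^2+1) + r0/(t*Real.sqrt (r0^2+t^2+1)) else 0)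
          + (if r0/2 ≤ t then r0/Real.sqrt (r0^2+t^2+1) else 0)) := by
  simp only [gfun]
  set sD := Real.sqrt (r0^2+t^2+1) with hsDdef
  set u0 := Real.sqrt (r0^2+1) with hu0def
  set u1 := Real.sqrt (r1^2+1) with hu1def
  set u2 := Real.sqrt (r2^2+1) with hu2def
  have hu0sq : u0^2 = r0^2+1 := Real.sq_sqrt (by positivity)
  have hu1sq : u1^2 = r1^2+1 := Real.sq_sqrt (by positivity)
  have hu2sq : u2^2 = r2^2+1 := Real.sq_sqrt (by positivity)
  have hsDsq : sD^2 = r0^2+t^2+1 := Real.sq_sqrt (by positivity)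
  have hu0 : 1 ≤ u0 := one_le_sqrt_sq_add_one
  have hu1 : 1 ≤ u1 := one_le_sqrt_sq_add_one
  have hu2 : 1 ≤ u2 := one_le_sqrt_sq_add_one
  have hsD : 1 ≤ sD := by
    nlinarith [Real.sqrt_nonneg (r0^2+t^2+1), hsDsq]
  have hsD0 : 0 < sD := by linarith
  have ht' : t ≠ 0 := ht.ne'
  have hsD' : sD ≠ 0 := hsD0.ne'
  have hAbs1 : |(u0 - Real.log (u0+1)) - (u1 - Real.log (u1+1))| ≤ t := by
    calc |(u0 - Real.log (u0+1)) - (u1 - Real.log (u1+1))| ≤ |u0 - u1| :=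
          habs_h (by linarith) (by linarith)
      _ ≤ |r0 - r1| := by rw [hu0def, hu1def]; exact sqrt_lip_s11 hr0 hr1
      _ ≤ t := htri1
  have hAbs2 : |(u0 - Real.log (u0+1)) - (u2 - Real.log (u2+1))| ≤ t := by
    calc |(u0 - Real.log (u0+1)) - (u2 - Real.log (u2+1))| ≤ |u0 - u2| :=
          habs_h (by linarith) (by linarith)
      _ ≤ |r0 - r2| := by rw [hu0def, hu2def]; exact sqrt_lip_s11 hr0 hr2
      _ ≤ t := htri2
  have hAmB : |(u2 - Real.log (u2+1)) - (u1 - Real.log (u1+1))| ≤ 4*(r0*t)/sD := by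
    rcases le_total u1 u2 with h | h
    · rw [abs_of_nonneg (hdiff_bounds (by linarith) h).1]
      have h12 : r1^2 ≤ r2^2 := by
        have := pow_le_pow_left₀ (by linarith : (0:ℝ) ≤ u1) h 2
        linarith [hu1sq, hu2sq]
      have hsDu2 : sD ≤ u2 := by
        rw [hsDdef, hu2def]
        exact Real.sqrt_le_sqrt (by linarith)
      have hk : (u2 - u1)*(u1 + u2) ≤ 4*(r0*t) := by
        have e : (u2 - u1)*(u1 + u2) = r2^2 - r1^2 := by
          linear_combination hu2sq - hu1sq
        rw [e]; exact le_trans (le_abs_self _) hd21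
      exact diff_bound2 hu1 hu2 h hsD hsDu2 hk
    · rw [abs_sub_comm, abs_of_nonneg (hdiff_bounds (by linarith) h).1]
      have h21 : r2^2 ≤ r1^2 := by
        have := pow_le_pow_left₀ (by linarith : (0:ℝ) ≤ u2) h 2
        linarith [hu1sq, hu2sq]
      have hsDu1 : sD ≤ u1 := by
        rw [hsDdef, hu1def]
        exact Real.sqrt_le_sqrt (by linarith)
      have hk : (u1 - u2)*(u2 + u1) ≤ 4*(r0*t) := by
        have e : (u1 - u2)*(u2 + u1) = r1^2 - r2^2 := by
          linear_combination hu1sq - hu2sq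
        rw [e]
        have := neg_abs_le (r2^2 - r1^2)
        linarith [hd21]
      exact diff_bound2 hu2 hu1 h hsD hsDu1 hk
  have hfact : (s * ((u0 - Real.log (u0+1)) - (u1 - Real.log (u1+1))) / t)^2
      - (s * ((u0 - Real.log (u0+1)) - (u2 - Real.log (u2+1))) / t)^2
      = (s/t)^2 * ((((u0 - Real.log (u0+1)) - (u1 - Real.log (u1+1)))
          + ((u0 - Real.log (u0+1)) - (u2 - Real.log (u2+1))))
        * ((u2 - Real.log (u2+1)) - (u1 - Real.log (u1+1)))) := by ring
  rw [hfact, abs_mul, abs_mul, abs_of_nonneg (sq_nonneg (s/t))]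
  clear hfact
  rcases le_or_gt t (r0/2) with hnear | hfar
  · rw [if_pos hnear]
    have hApB := near_sum_bound ht hr0 hu0 hu1 hu2 hsD hu0sq hu1sq hu2sq hsDsq hpar hprod hnear
    refine le_trans (mul_le_mul_of_nonneg_left
      (mul_le_mul hApB hAmB (abs_nonneg _) (by positivity)) (sq_nonneg (s/t))) ?_
    have e2 : (s/t)^2 * ((14*t^2/sD) * (4*(r0*t)/sD)) = 56*s^2*(r0*t/(r0^2+t^2+1)) := by
      rw [show r0^2+t^2+1 = sD^2 from hsDsq.symm]
      field_simp
      ring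
    rw [e2]
    have h2 : 0 ≤ s^2*(r0/(t*sD)) := by positivity
    have h3 : 0 ≤ s^2*(if r0/2 ≤ t then r0/sD else 0) := by
      rcases le_or_gt (r0/2) t with h|h
      · rw [if_pos h]; positivity
      · rw [if_neg (not_le.mpr h), mul_zero]
    have h4 : 0 ≤ s^2*(r0*t/(r0^2+t^2+1)) := by positivity
    linarith
  · rw [if_neg (not_le.mpr hfar), if_pos hfar.le]
    have hsum : |((u0 - Real.log (u0+1)) - (u1 - Real.log (u1+1)))
        + ((u0 - Real.log (u0+1)) - (u2 - Real.log (u2+1)))| ≤ 2*t :=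
      le_trans (abs_add_le _ _) (by linarith)
    refine le_trans (mul_le_mul_of_nonneg_left
      (mul_le_mul hsum hAmB (abs_nonneg _) (by linarith)) (sq_nonneg (s/t))) ?_
    have e2 : (s/t)^2 * ((2*t) * (4*(r0*t)/sD)) = 8*s^2*(r0/sD) := by
      field_simp
      ring
    rw [e2]
    have h4 : 0 ≤ s^2*(r0/sD) := by positivity
    linarith

open MeasureTheory

noncomputable section

/-- The finite difference quotient `Δ_α f(y) = (f(y) − f(y−α))/|α|`. -/
def dquot (f : E2 → ℝ) (α y : E2) : ℝ := (f y - f (y - α)) / ‖α‖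

/-- Pointwise bound for
`|(Δ_α k^Lin_s(y))² − (Δ_{−α} k^Lin_s(y))²|`. -/
theorem statement_11 :
    ∃ C > (0 : ℝ), ∀ (s : ℝ) (y α : E2), α ≠ 0 →
      |dquot (kLin s) α y ^ 2 - dquot (kLin s) (-α) y ^ 2| ≤
        C * s ^ 2 *
          ((if ‖α‖ ≤ ‖y‖ / 2 then
              ‖y‖ * ‖α‖ / (‖y‖ ^ 2 + ‖α‖ ^ 2 + 1)
                + ‖y‖ / (‖α‖ * Real.sqrt (‖y‖ ^ 2 + ‖α‖ ^ 2 + 1))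
            else 0)
          + (if ‖y‖ / 2 ≤ ‖α‖ then ‖y‖ / Real.sqrt (‖y‖ ^ 2 + ‖α‖ ^ 2 + 1) else 0)) := by
  refine ⟨100, by norm_num, ?_⟩
  intro s y α hα
  have ht : (0:ℝ) < ‖α‖ := norm_pos_iff.mpr hα
  have hip : |(inner ℝ y α : ℝ)| ≤ ‖y‖ * ‖α‖ := abs_real_inner_le_norm y α
  have hsq1 : ‖y - α‖^2 = ‖y‖^2 - 2*(inner ℝ y α : ℝ) + ‖α‖^2 := norm_sub_sq_real y α
  have hsq2 : ‖y + α‖^2 = ‖y‖^2 + 2*(inner ℝ y α : ℝ) + ‖α‖^2 := norm_add_sq_real y α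
  have hpar : ‖y-α‖^2 + ‖y+α‖^2 = 2*‖y‖^2 + 2*‖α‖^2 := by linarith
  have hd21 : |‖y+α‖^2 - ‖y-α‖^2| ≤ 4*(‖y‖*‖α‖) := by
    have e : ‖y+α‖^2 - ‖y-α‖^2 = 4*(inner ℝ y α : ℝ) := by linarith
    have e4 : |(4:ℝ)*(inner ℝ y α : ℝ)| = 4*|(inner ℝ y α : ℝ)| := by
      rw [abs_mul]; norm_num
    rw [e, e4]; linarith
  have hprod : (‖y‖^2 - ‖α‖^2)^2 ≤ ‖y-α‖^2 * ‖y+α‖^2 := by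
    have hp2 : (inner ℝ y α : ℝ)^2 ≤ (‖y‖*‖α‖)^2 := by
      obtain ⟨h1, h2⟩ := abs_le.mp hip
      nlinarith
    have e : ‖y-α‖^2 * ‖y+α‖^2 = (‖y‖^2+‖α‖^2)^2 - 4*(inner ℝ y α : ℝ)^2 := by
      rw [hsq1, hsq2]; ring
    rw [e]; nlinarith [hp2]
  have htri1 : |‖y‖ - ‖y-α‖| ≤ ‖α‖ := by simpa using abs_norm_sub_norm_le y (y-α)
  have htri2 : |‖y‖ - ‖y+α‖| ≤ ‖α‖ := by simpa using abs_norm_sub_norm_le y (y+α)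
  have hd1 : dquot (kLin s) α y = s * (gfun ‖y‖ - gfun ‖y - α‖) / ‖α‖ := by
    simp only [dquot, kLin, gfun]; ring
  have hd2 : dquot (kLin s) (-α) y = s * (gfun ‖y‖ - gfun ‖y + α‖) / ‖α‖ := by
    simp only [dquot, kLin, gfun, norm_neg, sub_neg_eq_add]; ring
  rw [hd1, hd2]
  exact key s ‖α‖ ‖y‖ ‖y-α‖ ‖y+α‖ ht (norm_nonneg y) (norm_nonneg _) (norm_nonneg _)
    hpar hd21 hprod htri1 htri2

end
end

section
/- There is an absolute constant C such that for all s ∈ ℝ, y ∈ ℝ² and α ∈ ℝ² with α ≠ 0: |(δ_α − δ_{−α}) k^Lin_s(y)| = |k^Lin_s(y+α) − k^Lin_s(y−α)| ≤ C·|s|·|y||α|/√(|y|²+|α|²+1). -/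
open MeasureTheory

noncomputable section

lemma phi_lip {u v : ℝ} (hv : 0 ≤ v) (huv : v ≤ u) :
    |(u - Real.log (u + 1)) - (v - Real.log (v + 1))| ≤ u - v := by
  have hv1 : (0:ℝ) < v + 1 := by linarith
  have hu1 : (0:ℝ) < u + 1 := by linarith
  have hlog_le : Real.log (u + 1) - Real.log (v + 1) ≤ u - v := by
    rw [← Real.log_div (by linarith) (by linarith)]
    have h1 := Real.log_le_sub_one_of_pos (show 0 < (u + 1) / (v + 1) by positivity)
    have h2 : (u + 1) / (v + 1) - 1 ≤ u - v := by
      rw [div_sub_one (by linarith), div_le_iff₀ hv1]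
      nlinarith
    linarith
  have hlog_ge : Real.log (v + 1) ≤ Real.log (u + 1) :=
    Real.log_le_log hv1 (by linarith)
  rw [abs_le]
  constructor <;> linarith

/-- `|(δ_α − δ_{−α})k^Lin_s(y)| = |k^Lin_s(y+α) − k^Lin_s(y−α)|
≤ C |s| |y||α| / √(|y|²+|α|²+1)`. -/
theorem statement_12 :
    ∃ C > (0 : ℝ), ∀ (s : ℝ) (y α : E2), α ≠ 0 →
      |(kLin s y - kLin s (y - α)) - (kLin s y - kLin s (y + α))| ≤
        C * |s| * (‖y‖ * ‖α‖ / Real.sqrt (‖y‖ ^ 2 + ‖α‖ ^ 2 + 1)) := by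
  refine ⟨4, by norm_num, ?_⟩
  intro s y α _
  have hA : (0:ℝ) ≤ ‖y + α‖ ^ 2 + 1 := by positivity
  have hB : (0:ℝ) ≤ ‖y - α‖ ^ 2 + 1 := by positivity
  set a := Real.sqrt (‖y + α‖ ^ 2 + 1) with haeq
  set b := Real.sqrt (‖y - α‖ ^ 2 + 1) with hbeq
  have ha0 : 0 ≤ a := Real.sqrt_nonneg _
  have hb0 : 0 ≤ b := Real.sqrt_nonneg _
  have ha2 : a ^ 2 = ‖y + α‖ ^ 2 + 1 := Real.sq_sqrt hA
  have hb2 : b ^ 2 = ‖y - α‖ ^ 2 + 1 := Real.sq_sqrt hB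
  have hL : (kLin s y - kLin s (y - α)) - (kLin s y - kLin s (y + α))
      = s * ((a - Real.log (a + 1)) - (b - Real.log (b + 1))) := by
    simp only [kLin, ← haeq, ← hbeq]
    ring
  have hkey : |(a - Real.log (a + 1)) - (b - Real.log (b + 1))| ≤ |a - b| := by
    rcases le_total b a with h | h
    · calc |(a - Real.log (a + 1)) - (b - Real.log (b + 1))| ≤ a - b := phi_lip hb0 h
        _ ≤ |a - b| := le_abs_self _
    · rw [abs_sub_comm]
      calc |(b - Real.log (b + 1)) - (a - Real.log (a + 1))| ≤ b - a := phi_lip ha0 h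
        _ ≤ |b - a| := le_abs_self _
        _ = |a - b| := abs_sub_comm b a
  have h1 : ‖y + α‖ ^ 2 = ‖y‖ ^ 2 + 2 * (inner ℝ y α : ℝ) + ‖α‖ ^ 2 := norm_add_sq_real y α
  have h2 : ‖y - α‖ ^ 2 = ‖y‖ ^ 2 - 2 * (inner ℝ y α : ℝ) + ‖α‖ ^ 2 := norm_sub_sq_real y α
  have hdiff : a ^ 2 - b ^ 2 = 4 * (inner ℝ y α : ℝ) := by
    rw [ha2, hb2, h1, h2]; ring
  have hinner : |(inner ℝ y α : ℝ)| ≤ ‖y‖ * ‖α‖ := abs_real_inner_le_norm y α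
  set T := Real.sqrt (‖y‖ ^ 2 + ‖α‖ ^ 2 + 1) with hTeq
  have hT0 : 0 < T := Real.sqrt_pos.mpr (by positivity)
  have hT : T ≤ a + b := by
    have h : ‖y‖ ^ 2 + ‖α‖ ^ 2 + 1 ≤ (a + b) ^ 2 := by
      nlinarith [mul_nonneg ha0 hb0]
    calc T ≤ Real.sqrt ((a + b) ^ 2) := Real.sqrt_le_sqrt h
      _ = a + b := Real.sqrt_sq (by linarith)
  have habs : |a - b| * (a + b) ≤ 4 * (‖y‖ * ‖α‖) := by
    have heq : |a - b| * (a + b) = |a ^ 2 - b ^ 2| := by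
      rw [← abs_of_nonneg (by linarith : (0:ℝ) ≤ a + b), ← abs_mul]
      congr 1; ring
    rw [heq, hdiff, abs_mul, abs_of_nonneg (by norm_num : (0:ℝ) ≤ 4)]
    linarith
  have hab : |a - b| ≤ 4 * (‖y‖ * ‖α‖) / T := by
    rw [le_div_iff₀ hT0]
    calc |a - b| * T ≤ |a - b| * (a + b) :=
          mul_le_mul_of_nonneg_left hT (abs_nonneg _)
      _ ≤ 4 * (‖y‖ * ‖α‖) := habs
  calc |(kLin s y - kLin s (y - α)) - (kLin s y - kLin s (y + α))|
      = |s| * |(a - Real.log (a + 1)) - (b - Real.log (b + 1))| := by rw [hL, abs_mul]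
    _ ≤ |s| * |a - b| := mul_le_mul_of_nonneg_left hkey (abs_nonneg _)
    _ ≤ |s| * (4 * (‖y‖ * ‖α‖) / T) := mul_le_mul_of_nonneg_left hab (abs_nonneg _)
    _ = 4 * |s| * (‖y‖ * ‖α‖ / T) := by ring
end
end

section
/- There is an absolute constant C such that for all s ∈ ℝ, y ∈ ℝ² and α ∈ ℝ² with α ≠ 0: if |α| ≤ |y|/2 then |(δ_α + δ_{−α}) k^Lin_s(y)| = |2k^Lin_s(y) − k^Lin_s(y−α) − k^Lin_s(y+α)| ≤ C·|s|·(|α|²/√(|y|²+|α|²+1) + 1), and if |α| ≥ |y|/2 then |(δ_α + δ_{−α}) k^Lin_s(y)| ≤ C·|s|·|α|. -/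
open MeasureTheory

noncomputable section

section Helpers

private lemma half_le_of_sq (x y : ℝ) (_hx : 0 ≤ x) (hy : 0 ≤ y) (h : x^2/4 ≤ y^2) :
    x/2 ≤ y := by nlinarith

private lemma le_two_of_sq (x y : ℝ) (hx : 0 ≤ x) (_hy : 0 ≤ y) (h : y^2 ≤ 4*x^2) :
    y ≤ 2*x := by nlinarith

private lemma one_le_sqrt'' (x : ℝ) (h : 1 ≤ x) : 1 ≤ Real.sqrt x := by
  rw [show (1:ℝ) = Real.sqrt 1 by simp]
  exact Real.sqrt_le_sqrt h

private lemma two_t_bound (x q t : ℝ) (hx : 0 ≤ x) (hq : 0 ≤ q) (ht : t^2 ≤ x*q) :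
    2*|t| ≤ x/2 + 2*q := by
  nlinarith [sq_nonneg (x/2 - 2*q), sq_nonneg (x/2 + 2*q - 2*|t|), sq_abs t, abs_nonneg t]

private lemma W_bound (Cc A B c q : ℝ) (hCc0 : 0 ≤ Cc) (hA0 : 0 ≤ A) (hB0 : 0 ≤ B)
    (hq : 0 ≤ q) (hCc2 : Cc^2 = c) (hsum : A^2 + B^2 = 2*c + 2*q) : (A+B)*Cc ≤ 2*c + q := by
  have hc0 : 0 ≤ c := hCc2 ▸ sq_nonneg Cc
  have h1 : (A+B)^2 ≤ 4*c+4*q := by nlinarith [sq_nonneg (A-B)]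
  have h2 : ((A+B)*Cc)^2 ≤ (4*c+4*q)*c := by
    have : (A+B)^2 * c ≤ (4*c+4*q)*c := mul_le_mul_of_nonneg_right h1 hc0
    nlinarith [this]
  have h3 : ((A+B)*Cc)^2 ≤ (2*c+q)^2 := by nlinarith [sq_nonneg q]
  nlinarith [mul_nonneg (add_nonneg hA0 hB0) hCc0, h3]

set_option maxHeartbeats 1000000 in
private lemma sqrt_part (c q t : ℝ) (hc : 1 ≤ c) (hq : 0 ≤ q) (hqc : q ≤ (c-1)/4)
    (ht : t^2 ≤ (c-1)*q) :
    |2*Real.sqrt c - Real.sqrt (c - 2*t + q) - Real.sqrt (c + 2*t + q)| ≤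
      8*q/Real.sqrt (c+q) := by
  have htabs : 2*|t| ≤ (c-1)/2 + 2*q := two_t_bound (c-1) q t (by linarith) hq ht
  have ht1 : 2*t ≤ (c-1)/2 + 2*q := by cases abs_cases t with
    | inl h => linarith [h.1] | inr h => linarith [h.1, abs_nonneg t]
  have ht2 : -((c-1)/2 + 2*q) ≤ 2*t := by cases abs_cases t with
    | inl h => linarith [h.1, abs_nonneg t] | inr h => linarith [h.1]
  set Cc := Real.sqrt c with hCcd
  set A := Real.sqrt (c - 2*t + q) with hAd
  set B := Real.sqrt (c + 2*t + q) with hBd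
  set S := Real.sqrt (c+q) with hSd
  have ha1 : (1:ℝ) ≤ c - 2*t + q := by linarith
  have hb1 : (1:ℝ) ≤ c + 2*t + q := by linarith
  have hCc2 : Cc^2 = c := Real.sq_sqrt (by linarith)
  have hA2 : A^2 = c - 2*t + q := Real.sq_sqrt (by linarith)
  have hB2 : B^2 = c + 2*t + q := Real.sq_sqrt (by linarith)
  have hS2 : S^2 = c + q := Real.sq_sqrt (by linarith)
  have hCc0 : 0 ≤ Cc := Real.sqrt_nonneg _
  have hA0 : 0 ≤ A := Real.sqrt_nonneg _
  have hB0 : 0 ≤ B := Real.sqrt_nonneg _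
  have hS0 : 0 ≤ S := Real.sqrt_nonneg _
  have hCc1 : 1 ≤ Cc := one_le_sqrt'' c hc
  have hS1 : 1 ≤ S := one_le_sqrt'' (c+q) (by linarith)
  have hACc : Cc/2 ≤ A := half_le_of_sq Cc A hCc0 hA0 (by rw [hCc2, hA2]; linarith)
  have hBCc : Cc/2 ≤ B := half_le_of_sq Cc B hCc0 hB0 (by rw [hCc2, hB2]; linarith)
  have hSCc : S ≤ 2*Cc := le_two_of_sq Cc S hCc0 hS0 (by rw [hCc2, hS2]; linarith)
  have hSpos : (0:ℝ) < S := by linarith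
  have e1 : (Cc - A)*(Cc + A) = 2*t - q := by linear_combination hCc2 - hA2
  have e2 : (Cc - B)*(Cc + B) = -(2*t) - q := by linear_combination hCc2 - hB2
  have e3 : (B - A)*(B + A) = 4*t := by linear_combination hB2 - hA2
  have key : (2*Cc - A - B) * ((Cc+A)*(Cc+B)*(A+B)) =
      8*t^2 - q*((2*Cc+A+B)*(A+B)) := by
    linear_combination ((Cc+B)*(A+B))*e1 + ((Cc+A)*(A+B))*e2 + (2*t)*e3
  have hub : 2*Cc - A - B ≤ 8*q/S := by
    rcases le_or_gt (2*Cc - A - B) 0 with h | h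
    · have : 0 ≤ 8*q/S := by positivity
      linarith
    · have p12 : ((3/2)*Cc)*((3/2)*Cc) ≤ (Cc+A)*(Cc+B) :=
        mul_le_mul (by linarith) (by linarith) (by positivity) (by linarith)
      have hY : (9/4)*Cc^3 ≤ (Cc+A)*(Cc+B)*(A+B) := by
        have := mul_le_mul p12 (show Cc ≤ A+B by linarith) hCc0
          (mul_nonneg (by linarith) (by linarith))
        nlinarith [this]
      have hqX : 0 ≤ q*((2*Cc+A+B)*(A+B)) :=
        mul_nonneg hq (mul_nonneg (by linarith) (by linarith))
      have h2 : (2*Cc - A - B) * ((9/4)*Cc^3) ≤ (2*Cc - A - B) * ((Cc+A)*(Cc+B)*(A+B)) :=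
        mul_le_mul_of_nonneg_left hY h.le
      have h1 : (2*Cc - A - B) * ((9/4)*Cc^3) ≤ 8*t^2 := by linarith
      have hCc2pos : (0:ℝ) < (9/4)*Cc^2 := by positivity
      have h3 : (2*Cc - A - B) * Cc ≤ (8*Cc^2*q)/((9/4)*Cc^2) := by
        rw [le_div_iff₀ hCc2pos]
        nlinarith [h1, ht, hq, hCc2]
      have h4 : (8*Cc^2*q)/((9/4)*Cc^2) = 32/9*q := by
        field_simp
        ring
      have h5 : (2*Cc - A - B) * Cc ≤ 32/9*q := by rw [h4] at h3; exact h3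
      rw [le_div_iff₀ hSpos]
      calc (2*Cc - A - B) * S ≤ (2*Cc - A - B) * (2*Cc) := mul_le_mul_of_nonneg_left hSCc h.le
        _ ≤ 8*q := by nlinarith [h5, hq]
  have hlb : A + B - 2*Cc ≤ 8*q/S := by
    have hW : (A+B)*Cc ≤ 2*c + q :=
      W_bound Cc A B c q hCc0 hA0 hB0 hq hCc2 (by rw [hA2, hB2]; ring)
    have h4 : (A + B - 2*Cc) * Cc ≤ q := by nlinarith [hW, hCc2]
    rw [le_div_iff₀ hSpos]
    rcases le_or_gt (A + B - 2*Cc) 0 with h | h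
    · nlinarith [hq, hS0, h]
    · calc (A + B - 2*Cc) * S ≤ (A + B - 2*Cc) * (2*Cc) := mul_le_mul_of_nonneg_left hSCc h.le
        _ ≤ 8*q := by nlinarith [h4, hq]
  rw [abs_le]
  constructor <;> linarith

set_option maxHeartbeats 1000000 in
private lemma log_part (c q t : ℝ) (hc : 1 ≤ c) (hq : 0 ≤ q) (hqc : q ≤ (c-1)/4)
    (ht : t^2 ≤ (c-1)*q) :
    |2*Real.log (Real.sqrt c + 1) - Real.log (Real.sqrt (c - 2*t + q) + 1)
      - Real.log (Real.sqrt (c + 2*t + q) + 1)| ≤ 2 := by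
  have htabs : 2*|t| ≤ (c-1)/2 + 2*q := two_t_bound (c-1) q t (by linarith) hq ht
  have ht1 : 2*t ≤ (c-1)/2 + 2*q := by cases abs_cases t with
    | inl h => linarith [h.1] | inr h => linarith [h.1, abs_nonneg t]
  have ht2 : -((c-1)/2 + 2*q) ≤ 2*t := by cases abs_cases t with
    | inl h => linarith [h.1, abs_nonneg t] | inr h => linarith [h.1]
  set Cc := Real.sqrt c with hCcd
  set A := Real.sqrt (c - 2*t + q) with hAd
  set B := Real.sqrt (c + 2*t + q) with hBd
  have ha1 : (1:ℝ) ≤ c - 2*t + q := by linarith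
  have hb1 : (1:ℝ) ≤ c + 2*t + q := by linarith
  have hCc2 : Cc^2 = c := Real.sq_sqrt (by linarith)
  have hA2 : A^2 = c - 2*t + q := Real.sq_sqrt (by linarith)
  have hB2 : B^2 = c + 2*t + q := Real.sq_sqrt (by linarith)
  have hCc0 : 0 ≤ Cc := Real.sqrt_nonneg _
  have hA0 : 0 ≤ A := Real.sqrt_nonneg _
  have hB0 : 0 ≤ B := Real.sqrt_nonneg _
  have hCc1 : 1 ≤ Cc := one_le_sqrt'' c hc
  have hACc : Cc/2 ≤ A := half_le_of_sq Cc A hCc0 hA0 (by rw [hCc2, hA2]; linarith)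
  have hBCc : Cc/2 ≤ B := half_le_of_sq Cc B hCc0 hB0 (by rw [hCc2, hB2]; linarith)
  have hAup : A ≤ 2*Cc := le_two_of_sq Cc A hCc0 hA0 (by rw [hCc2, hA2]; linarith)
  have hBup : B ≤ 2*Cc := le_two_of_sq Cc B hCc0 hB0 (by rw [hCc2, hB2]; linarith)
  have step : ∀ X : ℝ, 0 ≤ X → Cc/2 ≤ X → X ≤ 2*Cc →
      |Real.log (Cc + 1) - Real.log (X + 1)| ≤ 1 := by
    intro X hX0 hXl hXu
    have hd1 : Real.log (Cc+1) - Real.log (X+1) = Real.log ((Cc+1)/(X+1)) := by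
      rw [Real.log_div (by linarith) (by linarith)]
    have hd2 : Real.log (X+1) - Real.log (Cc+1) = Real.log ((X+1)/(Cc+1)) := by
      rw [Real.log_div (by linarith) (by linarith)]
    rw [abs_le]
    constructor
    · have h1 := Real.log_le_sub_one_of_pos (show (0:ℝ) < (X+1)/(Cc+1) by positivity)
      have h2 : (X+1)/(Cc+1) ≤ 2 := by rw [div_le_iff₀ (by linarith)]; linarith
      linarith [hd2, h1, h2]
    · have h1 := Real.log_le_sub_one_of_pos (show (0:ℝ) < (Cc+1)/(X+1) by positivity)
      have h2 : (Cc+1)/(X+1) ≤ 2 := by rw [div_le_iff₀ (by linarith)]; linarith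
      linarith [hd1, h1, h2]
  have sA := step A hA0 hACc hAup
  have sB := step B hB0 hBCc hBup
  have hsplit : 2*Real.log (Cc + 1) - Real.log (A + 1) - Real.log (B + 1)
      = (Real.log (Cc+1) - Real.log (A+1)) + (Real.log (Cc+1) - Real.log (B+1)) := by ring
  rw [hsplit]
  calc |(Real.log (Cc+1) - Real.log (A+1)) + (Real.log (Cc+1) - Real.log (B+1))|
      ≤ |Real.log (Cc+1) - Real.log (A+1)| + |Real.log (Cc+1) - Real.log (B+1)| := abs_add_le _ _
    _ ≤ 2 := by linarith [sA, sB]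

private lemma g_lip_aux (r1 r2 : ℝ) (h2 : 0 ≤ r2) (h12 : r2 ≤ r1) :
    (Real.sqrt (r1^2+1) - Real.log (Real.sqrt (r1^2+1)+1)) -
      (Real.sqrt (r2^2+1) - Real.log (Real.sqrt (r2^2+1)+1)) ∈ Set.Icc 0 (r1 - r2) := by
  set U := Real.sqrt (r1^2+1) with hUdef
  set V := Real.sqrt (r2^2+1) with hVdef
  have h1 : 0 ≤ r1 := le_trans h2 h12
  have hU2 : U^2 = r1^2+1 := Real.sq_sqrt (by positivity)
  have hV2 : V^2 = r2^2+1 := Real.sq_sqrt (by positivity)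
  have hU0 : 0 ≤ U := Real.sqrt_nonneg _
  have hV0 : 0 ≤ V := Real.sqrt_nonneg _
  have hU1 : 1 ≤ U := by nlinarith [sq_nonneg r1]
  have hV1 : 1 ≤ V := by nlinarith [sq_nonneg r2]
  have hUr : r1 ≤ U := by nlinarith
  have hVr : r2 ≤ V := by nlinarith
  have hVU : V ≤ U := by
    apply Real.sqrt_le_sqrt; nlinarith
  have hUV : U - V ≤ r1 - r2 := by
    nlinarith [mul_nonneg (sub_nonneg.2 h12) (sub_nonneg.2 hUr),
      mul_nonneg (sub_nonneg.2 h12) (sub_nonneg.2 hVr)]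
  have hlog1 : Real.log (V+1) ≤ Real.log (U+1) :=
    Real.log_le_log (by linarith) (by linarith)
  have hlog2 : Real.log (U+1) - Real.log (V+1) ≤ U - V := by
    have e : Real.log (U+1) - Real.log (V+1) = Real.log ((U+1)/(V+1)) := by
      rw [Real.log_div (by linarith) (by linarith)]
    rw [e]
    have h := Real.log_le_sub_one_of_pos (show (0:ℝ) < (U+1)/(V+1) by positivity)
    have e2 : (U+1)/(V+1) - 1 = (U - V)/(V+1) := by field_simp; ring
    have e3 : (U - V)/(V+1) ≤ U - V := by
      rw [div_le_iff₀ (by linarith)]; nlinarith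
    linarith
  exact Set.mem_Icc.mpr ⟨by linarith, by linarith⟩

private lemma g_lip (r1 r2 : ℝ) (h1 : 0 ≤ r1) (h2 : 0 ≤ r2) :
    |(Real.sqrt (r1^2+1) - Real.log (Real.sqrt (r1^2+1)+1)) -
      (Real.sqrt (r2^2+1) - Real.log (Real.sqrt (r2^2+1)+1))| ≤ |r1 - r2| := by
  rcases le_total r2 r1 with h | h
  · have hm := Set.mem_Icc.mp (g_lip_aux r1 r2 h2 h)
    have habs : r1 - r2 ≤ |r1 - r2| := le_abs_self _
    rw [abs_le]
    exact ⟨by linarith [abs_nonneg (r1-r2)], by linarith⟩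
  · have hm := Set.mem_Icc.mp (g_lip_aux r2 r1 h1 h)
    have habs : r2 - r1 ≤ |r1 - r2| := by rw [abs_sub_comm]; exact le_abs_self _
    rw [abs_le]
    constructor <;> linarith [abs_nonneg (r1-r2)]

end Helpers

/-- Bounds on `(δ_α + δ_{−α})k^Lin_s(y) = 2k^Lin_s(y) − k^Lin_s(y−α) − k^Lin_s(y+α)`:
if `|α| ≤ |y|/2` it is bounded by `C|s|(|α|²/√(|y|²+|α|²+1) + 1)`,
and if `|α| ≥ |y|/2` it is bounded by `C|s||α|`. -/
theorem statement_13 :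
    ∃ C > (0 : ℝ), ∀ (s : ℝ) (y α : E2), α ≠ 0 →
      (‖α‖ ≤ ‖y‖ / 2 →
        |2 * kLin s y - kLin s (y - α) - kLin s (y + α)| ≤
          C * |s| * (‖α‖ ^ 2 / Real.sqrt (‖y‖ ^ 2 + ‖α‖ ^ 2 + 1) + 1)) ∧
      (‖y‖ / 2 ≤ ‖α‖ →
        |2 * kLin s y - kLin s (y - α) - kLin s (y + α)| ≤ C * |s| * ‖α‖) := by
  refine ⟨8, by norm_num, fun s y α _ => ⟨?_, ?_⟩⟩
  · intro hαy
    set t : ℝ := inner ℝ y α with htd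
    have hc : (1:ℝ) ≤ ‖y‖^2 + 1 := by nlinarith [sq_nonneg ‖y‖]
    have hqc : ‖α‖^2 ≤ ((‖y‖^2 + 1) - 1)/4 := by
      have h := pow_le_pow_left₀ (norm_nonneg α) hαy 2
      nlinarith [h]
    have ht : t^2 ≤ ((‖y‖^2 + 1) - 1)*(‖α‖^2) := by
      have h := abs_real_inner_le_norm y α
      nlinarith [sq_abs t, abs_nonneg t, norm_nonneg y, norm_nonneg α, h]
    have hna : ‖y - α‖^2 + 1 = (‖y‖^2+1) - 2*t + ‖α‖^2 := by
      rw [norm_sub_sq_real]; ring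
    have hnb : ‖y + α‖^2 + 1 = (‖y‖^2+1) + 2*t + ‖α‖^2 := by
      rw [norm_add_sq_real]; ring
    have h1 := sqrt_part (‖y‖^2+1) (‖α‖^2) t hc (sq_nonneg _) hqc ht
    have h2 := log_part (‖y‖^2+1) (‖α‖^2) t hc (sq_nonneg _) hqc ht
    have hS : ‖y‖ ^ 2 + ‖α‖ ^ 2 + 1 = (‖y‖^2+1) + ‖α‖^2 := by ring
    simp only [kLin]
    rw [hna, hnb, hS]
    set c := ‖y‖^2 + 1
    set q := ‖α‖^2
    have hrw : 2 * (s * (Real.sqrt c - Real.log (Real.sqrt c + 1))) -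
        s * (Real.sqrt (c - 2*t + q) - Real.log (Real.sqrt (c - 2*t + q) + 1)) -
        s * (Real.sqrt (c + 2*t + q) - Real.log (Real.sqrt (c + 2*t + q) + 1)) =
        s * ((2*Real.sqrt c - Real.sqrt (c - 2*t + q) - Real.sqrt (c + 2*t + q)) -
          (2*Real.log (Real.sqrt c + 1) - Real.log (Real.sqrt (c - 2*t + q) + 1)
            - Real.log (Real.sqrt (c + 2*t + q) + 1))) := by ring
    rw [hrw, abs_mul]
    have hX : |(2*Real.sqrt c - Real.sqrt (c - 2*t + q) - Real.sqrt (c + 2*t + q)) -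
          (2*Real.log (Real.sqrt c + 1) - Real.log (Real.sqrt (c - 2*t + q) + 1)
            - Real.log (Real.sqrt (c + 2*t + q) + 1))| ≤ 8*q/Real.sqrt (c+q) + 2 := by
      calc _ ≤ |2*Real.sqrt c - Real.sqrt (c - 2*t + q) - Real.sqrt (c + 2*t + q)| +
          |2*Real.log (Real.sqrt c + 1) - Real.log (Real.sqrt (c - 2*t + q) + 1)
            - Real.log (Real.sqrt (c + 2*t + q) + 1)| := abs_sub _ _
        _ ≤ 8*q/Real.sqrt (c+q) + 2 := by linarith
    have hdivnn : 0 ≤ q/Real.sqrt (c+q) := by positivity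
    calc |s| * |(2*Real.sqrt c - Real.sqrt (c - 2*t + q) - Real.sqrt (c + 2*t + q)) -
          (2*Real.log (Real.sqrt c + 1) - Real.log (Real.sqrt (c - 2*t + q) + 1)
            - Real.log (Real.sqrt (c + 2*t + q) + 1))|
        ≤ |s| * (8*q/Real.sqrt (c+q) + 2) := mul_le_mul_of_nonneg_left hX (abs_nonneg s)
      _ ≤ 8 * |s| * (q/Real.sqrt (c+q) + 1) := by
          have hdiff : 8 * |s| * (q/Real.sqrt (c+q) + 1) - |s| * (8*q/Real.sqrt (c+q) + 2)
              = 6*|s| := by ring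
          linarith [abs_nonneg s, hdiff]
  · intro _
    simp only [kLin]
    have e1 : |‖y‖ - ‖y - α‖| ≤ ‖α‖ := by
      have h := abs_norm_sub_norm_le y (y - α)
      simpa using h
    have e2 : |‖y‖ - ‖y + α‖| ≤ ‖α‖ := by
      have h := abs_norm_sub_norm_le y (y + α)
      simpa using h
    have l1 := le_trans (g_lip ‖y‖ ‖y - α‖ (norm_nonneg _) (norm_nonneg _)) e1
    have l2 := le_trans (g_lip ‖y‖ ‖y + α‖ (norm_nonneg _) (norm_nonneg _)) e2
    have hrw : 2 * (s * (Real.sqrt (‖y‖^2 + 1) - Real.log (Real.sqrt (‖y‖^2 + 1) + 1))) -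
        s * (Real.sqrt (‖y - α‖^2 + 1) - Real.log (Real.sqrt (‖y - α‖^2 + 1) + 1)) -
        s * (Real.sqrt (‖y + α‖^2 + 1) - Real.log (Real.sqrt (‖y + α‖^2 + 1) + 1)) =
        s * (((Real.sqrt (‖y‖^2+1) - Real.log (Real.sqrt (‖y‖^2+1)+1)) -
              (Real.sqrt (‖y - α‖^2+1) - Real.log (Real.sqrt (‖y - α‖^2+1)+1))) +
             ((Real.sqrt (‖y‖^2+1) - Real.log (Real.sqrt (‖y‖^2+1)+1)) -
              (Real.sqrt (‖y + α‖^2+1) - Real.log (Real.sqrt (‖y + α‖^2+1)+1)))) := by ring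
    rw [hrw, abs_mul]
    have hsum : |((Real.sqrt (‖y‖^2+1) - Real.log (Real.sqrt (‖y‖^2+1)+1)) -
              (Real.sqrt (‖y - α‖^2+1) - Real.log (Real.sqrt (‖y - α‖^2+1)+1))) +
             ((Real.sqrt (‖y‖^2+1) - Real.log (Real.sqrt (‖y‖^2+1)+1)) -
              (Real.sqrt (‖y + α‖^2+1) - Real.log (Real.sqrt (‖y + α‖^2+1)+1)))| ≤
        ‖α‖ + ‖α‖ := le_trans (abs_add_le _ _) (by linarith)
    calc |s| * _ ≤ |s| * (‖α‖ + ‖α‖) := mul_le_mul_of_nonneg_left hsum (abs_nonneg s)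
      _ ≤ 8 * |s| * ‖α‖ := by nlinarith [abs_nonneg s, norm_nonneg α, mul_nonneg (abs_nonneg s) (norm_nonneg α)]

end
end

section
/- Let t₁ ∈ [1, 2) and t ∈ (t₁, t₁+1]. There is a constant C = C(t₁, t) such that for every measurable f : (0, ∞) → ℝ with ∫₀^∞ |f(r)|² r^{1+2t₁} dr < ∞, the function 𝓛[f] is well defined for a.e. r > 0 and ∫₀^∞ |𝓛[f](r)|² r^{1+2t} dr ≤ C · ∫₀^∞ |f(r)|² r^{1+2t₁} dr. -/
open MeasureTheory
open scoped ENNReal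

open Set Real

noncomputable section

/-- The linear operator `𝓛[f](r) = r⁻³ ∫₀^r σ² e^{σ−r} f(σ) dσ`. -/
def calL (f : ℝ → ℝ) (r : ℝ) : ℝ :=
  (∫ σ in Set.Ioc (0 : ℝ) r, σ ^ 2 * Real.exp (σ - r) * f σ) / r ^ 3

lemma lintegral_rpow_Ioc {s γ : ℝ} (hs : 0 < s) (hγ : -1 < γ) :
    ∫⁻ x in Set.Ioc 0 s, ENNReal.ofReal (x ^ γ) = ENNReal.ofReal (s ^ (γ + 1) / (γ + 1)) := by
  have hint : IntegrableOn (fun x : ℝ => x ^ γ) (Set.Ioc 0 s) := by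
    have := (intervalIntegral.intervalIntegrable_rpow' (a := 0) (b := s) hγ)
    rw [intervalIntegrable_iff_integrableOn_Ioc_of_le hs.le] at this
    exact this
  rw [← MeasureTheory.ofReal_integral_eq_lintegral_ofReal hint ?_]
  · congr 1
    rw [← intervalIntegral.integral_of_le hs.le, integral_rpow (Or.inl hγ)]
    rw [Real.zero_rpow (by linarith)]
    ring
  · filter_upwards [ae_restrict_mem measurableSet_Ioc] with x hx
    exact Real.rpow_nonneg hx.1.le _

lemma lintegral_exp_sub_Ioi (σ : ℝ) :
    ∫⁻ r in Set.Ioi σ, ENNReal.ofReal (Real.exp (σ - r)) = 1 := by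
  have hint : IntegrableOn (fun r : ℝ => Real.exp (σ - r)) (Set.Ioi σ) := by
    have h := (exp_neg_integrableOn_Ioi σ (b := 1) one_pos).const_mul (Real.exp σ)
    refine IntegrableOn.congr_fun h (fun r _ => ?_) measurableSet_Ioi
    rw [← Real.exp_add]; ring_nf
  rw [← MeasureTheory.ofReal_integral_eq_lintegral_ofReal hint ?_]
  · have : (∫ r in Set.Ioi σ, Real.exp (σ - r)) = Real.exp σ * ∫ r in Set.Ioi σ, Real.exp (-r) := by
      rw [← integral_const_mul]
      refine setIntegral_congr_fun measurableSet_Ioi (fun r _ => ?_)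
      rw [← Real.exp_add]; ring_nf
    rw [this, integral_exp_neg_Ioi, ← Real.exp_add]
    simp
  · filter_upwards with x using (Real.exp_pos _).le

-- ratio bound: for r/2 ≤ σ ≤ r, σ^α ≤ 2 r^α
lemma rpow_half_bound {α r σ : ℝ} (hα1 : -1 ≤ α) (hr : 0 < r) (h1 : r/2 ≤ σ) (h2 : σ ≤ r) :
    σ ^ α ≤ 2 * r ^ α := by
  have hσ : 0 < σ := lt_of_lt_of_le (by linarith) h1
  have hq : σ ^ α = r ^ α * (σ / r) ^ α := by
    rw [← Real.mul_rpow hr.le (by positivity)]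
    congr 1
    field_simp
  have hqle : (σ / r) ^ α ≤ 2 := by
    have h01 : 0 < σ / r := by positivity
    have h11 : σ / r ≤ 1 := by rw [div_le_one hr]; exact h2
    have := Real.rpow_le_rpow_of_exponent_ge h01 h11 hα1
    rw [Real.rpow_neg_one] at this
    refine this.trans ?_
    rw [inv_div]
    rw [div_le_iff₀ hσ]
    linarith
  calc σ ^ α = r ^ α * (σ / r) ^ α := hq
    _ ≤ r ^ α * 2 := by
        exact mul_le_mul_of_nonneg_left hqle (Real.rpow_nonneg hr.le _)
    _ = 2 * r ^ α := by ring

lemma lemA {α : ℝ} (hα1 : -1 < α) {r : ℝ} (hr : 0 < r) :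
    ∫⁻ σ in Set.Ioc 0 r, ENNReal.ofReal (σ ^ α * Real.exp (σ - r)) ≤
      ENNReal.ofReal ((2 / (α + 1) + 2) * (r ^ α * min r 1)) := by
  have hα1' : 0 < α + 1 := by linarith
  have hsplit : Set.Ioc (0:ℝ) r = Set.Ioc 0 (r/2) ∪ Set.Ioc (r/2) r :=
    (Set.Ioc_union_Ioc_eq_Ioc (by linarith) (by linarith)).symm
  rw [hsplit, lintegral_union measurableSet_Ioc (Set.Ioc_disjoint_Ioc_of_le le_rfl)]
  have hrα : 0 ≤ r ^ α := Real.rpow_nonneg hr.le _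
  have hmin : 0 ≤ min r 1 := le_min hr.le one_pos.le
  -- piece 1
  have p1 : ∫⁻ σ in Set.Ioc 0 (r/2), ENNReal.ofReal (σ ^ α * Real.exp (σ - r)) ≤
      ENNReal.ofReal (2 / (α + 1) * (r ^ α * min r 1)) := by
    have step1 : ∫⁻ σ in Set.Ioc 0 (r/2), ENNReal.ofReal (σ ^ α * Real.exp (σ - r)) ≤
        ∫⁻ σ in Set.Ioc 0 (r/2), ENNReal.ofReal (σ ^ α) * ENNReal.ofReal (Real.exp (-(r/2))) := by
      refine lintegral_mono_ae ?_
      filter_upwards [ae_restrict_mem measurableSet_Ioc] with σ hσ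
      rw [← ENNReal.ofReal_mul (Real.rpow_nonneg hσ.1.le _)]
      refine ENNReal.ofReal_le_ofReal ?_
      refine mul_le_mul_of_nonneg_left ?_ (Real.rpow_nonneg hσ.1.le _)
      exact Real.exp_le_exp.2 (by linarith [hσ.2])
    rw [lintegral_mul_const' _ _ (by simp)] at step1
    rw [lintegral_rpow_Ioc (by linarith) hα1] at step1
    refine step1.trans ?_
    rw [← ENNReal.ofReal_mul (by positivity)]
    refine ENNReal.ofReal_le_ofReal ?_
    have hh : (r/2) ^ (α+1) = (r/2) ^ α * (r/2) := by
      rw [Real.rpow_add (by linarith), Real.rpow_one]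
    have h2rα : (r/2) ^ α ≤ 2 * r ^ α := rpow_half_bound hα1.le hr (le_refl _) (by linarith)
    have hue : r/2 * Real.exp (-(r/2)) ≤ min r 1 := by
      have he1 : Real.exp (-(r/2)) ≤ 1 := Real.exp_le_one_iff.2 (by linarith)
      have he2 : r/2 ≤ Real.exp (r/2) := by linarith [Real.add_one_le_exp (r/2)]
      refine le_min ?_ ?_
      · nlinarith [Real.exp_pos (-(r/2))]
      · rw [Real.exp_neg]
        rw [← div_eq_mul_inv, div_le_one (Real.exp_pos _)]
        exact he2
    have hnn : (0:ℝ) ≤ (r/2)^α := Real.rpow_nonneg (by linarith) _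
    calc (r/2) ^ (α+1) / (α+1) * Real.exp (-(r/2))
        = ((r/2) ^ α * (r/2 * Real.exp (-(r/2)))) / (α+1) := by rw [hh]; ring
      _ ≤ ((2 * r ^ α) * min r 1) / (α+1) := by
          apply div_le_div_of_nonneg_right ?_ hα1'.le
          · exact mul_le_mul h2rα hue (by positivity) (by positivity)
      _ = 2 / (α+1) * (r ^ α * min r 1) := by ring
  -- piece 2
  have p2 : ∫⁻ σ in Set.Ioc (r/2) r, ENNReal.ofReal (σ ^ α * Real.exp (σ - r)) ≤
      ENNReal.ofReal (2 * (r ^ α * min r 1)) := by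
    have step1 : ∫⁻ σ in Set.Ioc (r/2) r, ENNReal.ofReal (σ ^ α * Real.exp (σ - r)) ≤
        ∫⁻ σ in Set.Ioc (r/2) r, ENNReal.ofReal (2 * r ^ α) * ENNReal.ofReal (Real.exp (σ - r)) := by
      refine lintegral_mono_ae ?_
      filter_upwards [ae_restrict_mem measurableSet_Ioc] with σ hσ
      rw [← ENNReal.ofReal_mul (by positivity)]
      refine ENNReal.ofReal_le_ofReal ?_
      exact mul_le_mul_of_nonneg_right (rpow_half_bound hα1.le hr hσ.1.le hσ.2)
        (Real.exp_pos _).le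
    rw [lintegral_const_mul' _ _ ENNReal.ofReal_ne_top] at step1
    have hexp : ∫⁻ σ in Set.Ioc (r/2) r, ENNReal.ofReal (Real.exp (σ - r)) =
        ENNReal.ofReal (1 - Real.exp (-(r/2))) := by
      have hint : IntegrableOn (fun σ : ℝ => Real.exp (σ - r)) (Set.Ioc (r/2) r) :=
        (Real.continuous_exp.comp (continuous_id.sub continuous_const)).integrableOn_Ioc
      rw [← MeasureTheory.ofReal_integral_eq_lintegral_ofReal hint
        (Filter.Eventually.of_forall fun x => (Real.exp_pos _).le)]
      congr 1
      rw [← intervalIntegral.integral_of_le (by linarith)]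
      have : ∀ σ : ℝ, Real.exp (σ - r) = Real.exp (-r) * Real.exp σ := by
        intro σ; rw [← Real.exp_add]; ring_nf
      simp_rw [this]
      rw [intervalIntegral.integral_const_mul, integral_exp, mul_sub, ← Real.exp_add,
        ← Real.exp_add]
      norm_num
      ring
    rw [hexp] at step1
    refine step1.trans ?_
    rw [← ENNReal.ofReal_mul (by positivity)]
    refine ENNReal.ofReal_le_ofReal ?_
    have hle : 1 - Real.exp (-(r/2)) ≤ min r 1 := by
      refine le_min ?_ ?_
      · linarith [Real.add_one_le_exp (-(r/2))]
      · linarith [Real.exp_pos (-(r/2))]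
    calc 2 * r ^ α * (1 - Real.exp (-(r/2))) ≤ 2 * r ^ α * min r 1 := by
          exact mul_le_mul_of_nonneg_left hle (by positivity)
      _ = 2 * (r ^ α * min r 1) := by ring
  calc _ ≤ ENNReal.ofReal (2 / (α + 1) * (r ^ α * min r 1)) +
        ENNReal.ofReal (2 * (r ^ α * min r 1)) := add_le_add p1 p2
    _ = ENNReal.ofReal ((2 / (α + 1) + 2) * (r ^ α * min r 1)) := by
        rw [← ENNReal.ofReal_add (by positivity) (by positivity)]
        ring_nf

lemma lemH {β : ℝ} (hβ1 : -2 < β) (hβ2 : β ≤ 0) {σ : ℝ} (hσ : 0 < σ) :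
    ∫⁻ r in Set.Ioi σ, ENNReal.ofReal (r ^ β * min r 1 * Real.exp (σ - r)) ≤
      ENNReal.ofReal (1 / (β + 2) + 1) := by
  have key : ∀ r ∈ Set.Ioi σ, ENNReal.ofReal (r ^ β * min r 1 * Real.exp (σ - r)) ≤
      (Set.Ioc (0:ℝ) 1).indicator (fun x => ENNReal.ofReal (x ^ (β + 1))) r +
      (Set.Ioi (1:ℝ)).indicator (fun x => ENNReal.ofReal (Real.exp (σ - x))) r := by
    intro r hr
    have hr0 : 0 < r := hσ.trans hr
    have hre : Real.exp (σ - r) ≤ 1 := Real.exp_le_one_iff.2 (by simp only [Set.mem_Ioi] at hr; linarith)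
    rcases le_or_gt r 1 with h1 | h1
    · have hmem : r ∈ Set.Ioc (0:ℝ) 1 := ⟨hr0, h1⟩
      rw [Set.indicator_of_mem hmem]
      refine le_add_of_le_of_nonneg ?_ (zero_le)
      refine ENNReal.ofReal_le_ofReal ?_
      have : min r 1 = r := min_eq_left h1
      rw [this]
      calc r ^ β * r * Real.exp (σ - r) ≤ r ^ β * r * 1 :=
            mul_le_mul_of_nonneg_left hre (by positivity)
        _ = r ^ (β + 1) := by rw [Real.rpow_add hr0, Real.rpow_one]; ring
    · have hmem : r ∈ Set.Ioi (1:ℝ) := h1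
      rw [Set.indicator_of_mem hmem]
      refine le_add_of_nonneg_of_le (zero_le) ?_
      refine ENNReal.ofReal_le_ofReal ?_
      have hmin : min r 1 = 1 := min_eq_right h1.le
      have hrβ : r ^ β ≤ 1 := Real.rpow_le_one_of_one_le_of_nonpos h1.le hβ2
      rw [hmin]
      calc r ^ β * 1 * Real.exp (σ - r) ≤ 1 * 1 * Real.exp (σ - r) := by
            refine mul_le_mul_of_nonneg_right ?_ (Real.exp_pos _).le
            rw [mul_one, mul_one]; exact hrβ
        _ = Real.exp (σ - r) := by ring
  calc ∫⁻ r in Set.Ioi σ, ENNReal.ofReal (r ^ β * min r 1 * Real.exp (σ - r))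
      ≤ ∫⁻ r in Set.Ioi σ,
        ((Set.Ioc (0:ℝ) 1).indicator (fun x => ENNReal.ofReal (x ^ (β + 1))) r +
         (Set.Ioi (1:ℝ)).indicator (fun x => ENNReal.ofReal (Real.exp (σ - x))) r) :=
        setLIntegral_mono' measurableSet_Ioi key
    _ = (∫⁻ r in Set.Ioi σ, (Set.Ioc (0:ℝ) 1).indicator (fun x => ENNReal.ofReal (x ^ (β + 1))) r)
        + ∫⁻ r in Set.Ioi σ, (Set.Ioi (1:ℝ)).indicator (fun x => ENNReal.ofReal (Real.exp (σ - x))) r := by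
        refine lintegral_add_left ?_ _
        have : Measurable (fun x : ℝ => ENNReal.ofReal (x ^ (β + 1))) := by fun_prop
        exact this.indicator measurableSet_Ioc
    _ ≤ (∫⁻ r, (Set.Ioc (0:ℝ) 1).indicator (fun x => ENNReal.ofReal (x ^ (β + 1))) r)
        + ∫⁻ r in Set.Ioi σ, ENNReal.ofReal (Real.exp (σ - r)) := by
        refine add_le_add (setLIntegral_le_lintegral _ _) (lintegral_mono fun r => ?_)
        exact Set.indicator_le_self _ _ r
    _ ≤ ENNReal.ofReal (1 / (β + 2)) + 1 := by
        refine add_le_add ?_ (le_of_eq (lintegral_exp_sub_Ioi σ))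
        rw [lintegral_indicator measurableSet_Ioc, lintegral_rpow_Ioc one_pos (by linarith)]
        rw [Real.one_rpow]
        norm_num
        rw [show β + 1 + 1 = β + 2 by ring]
    _ = ENNReal.ofReal (1 / (β + 2) + 1) := by
        have h2 : (0:ℝ) < β + 2 := by linarith
        rw [ENNReal.ofReal_add (by positivity) zero_le_one, ENNReal.ofReal_one]

lemma pointwiseCS (u v : ℝ) (huv : u + v = 4) (f : ℝ → ℝ) (hf : Measurable f) (r : ℝ) :
    (∫⁻ σ in Set.Ioc 0 r, ENNReal.ofReal (|σ ^ 2 * Real.exp (σ - r) * f σ|)) ^ (2:ℝ) ≤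
      (∫⁻ σ in Set.Ioc 0 r, ENNReal.ofReal (σ ^ u * Real.exp (σ - r))) *
      (∫⁻ σ in Set.Ioc 0 r, ENNReal.ofReal (σ ^ v * Real.exp (σ - r) * f σ ^ 2)) := by
  set μ := volume.restrict (Set.Ioc (0:ℝ) r)
  set F : ℝ → ℝ≥0∞ := fun σ => ENNReal.ofReal (σ ^ (u/2) * Real.exp ((σ - r)/2))
  set G : ℝ → ℝ≥0∞ := fun σ => ENNReal.ofReal (σ ^ (v/2) * Real.exp ((σ - r)/2) * |f σ|)
  have hF : AEMeasurable F μ := by fun_prop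
  have hG : AEMeasurable G μ := by fun_prop
  have hpq : (2:ℝ).HolderConjugate 2 := Real.HolderConjugate.two_two
  have step1 : ∫⁻ σ, (F * G) σ ∂μ ≤
      (∫⁻ σ, F σ ^ (2:ℝ) ∂μ) ^ (1/(2:ℝ)) * (∫⁻ σ, G σ ^ (2:ℝ) ∂μ) ^ (1/(2:ℝ)) :=
    ENNReal.lintegral_mul_le_Lp_mul_Lq μ hpq hF hG
  -- identify the integrands
  have hFG : ∀ σ ∈ Set.Ioc (0:ℝ) r, ENNReal.ofReal (|σ ^ 2 * Real.exp (σ - r) * f σ|) = (F * G) σ := by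
    intro σ hσ
    have hσ0 : 0 < σ := hσ.1
    simp only [F, G, Pi.mul_apply]
    rw [← ENNReal.ofReal_mul (by positivity)]
    congr 1
    rw [abs_mul, abs_mul, abs_of_nonneg (by positivity : (0:ℝ) ≤ σ ^ 2),
      abs_of_nonneg (Real.exp_pos _).le]
    have h2 : (σ:ℝ) ^ (2:ℕ) = σ ^ (u/2) * σ ^ (v/2) := by
      rw [← Real.rpow_add hσ0, show u/2 + v/2 = (2:ℝ) by linarith, ← Real.rpow_natCast σ 2]
      norm_num
    have h3 : Real.exp (σ - r) = Real.exp ((σ - r)/2) * Real.exp ((σ - r)/2) := by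
      rw [← Real.exp_add]; ring_nf
    rw [h2, h3]; ring
  have hF2 : ∀ σ ∈ Set.Ioc (0:ℝ) r, F σ ^ (2:ℝ) = ENNReal.ofReal (σ ^ u * Real.exp (σ - r)) := by
    intro σ hσ
    have hσ0 : 0 < σ := hσ.1
    show ENNReal.ofReal (σ ^ (u/2) * Real.exp ((σ - r)/2)) ^ (2:ℝ) = _
    rw [ENNReal.ofReal_rpow_of_nonneg (by positivity) (by norm_num : (0:ℝ) ≤ 2)]
    congr 1
    rw [show (2:ℝ) = ((2:ℕ):ℝ) by norm_num, Real.rpow_natCast]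
    have e1 : σ ^ (u/2) * σ ^ (u/2) = σ ^ u := by
      rw [← Real.rpow_add hσ0, show u/2 + u/2 = u by ring]
    have e2 : Real.exp ((σ-r)/2) * Real.exp ((σ-r)/2) = Real.exp (σ - r) := by
      rw [← Real.exp_add, show (σ-r)/2 + (σ-r)/2 = σ - r by ring]
    calc (σ ^ (u/2) * Real.exp ((σ - r)/2)) ^ 2
        = (σ ^ (u/2) * σ ^ (u/2)) * (Real.exp ((σ-r)/2) * Real.exp ((σ-r)/2)) := by ring
      _ = σ ^ u * Real.exp (σ - r) := by rw [e1, e2]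
  have hG2 : ∀ σ ∈ Set.Ioc (0:ℝ) r, G σ ^ (2:ℝ) = ENNReal.ofReal (σ ^ v * Real.exp (σ - r) * f σ ^ 2) := by
    intro σ hσ
    have hσ0 : 0 < σ := hσ.1
    show ENNReal.ofReal (σ ^ (v/2) * Real.exp ((σ - r)/2) * |f σ|) ^ (2:ℝ) = _
    rw [ENNReal.ofReal_rpow_of_nonneg (by positivity) (by norm_num : (0:ℝ) ≤ 2)]
    congr 1
    rw [show (2:ℝ) = ((2:ℕ):ℝ) by norm_num, Real.rpow_natCast]
    have e1 : σ ^ (v/2) * σ ^ (v/2) = σ ^ v := by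
      rw [← Real.rpow_add hσ0, show v/2 + v/2 = v by ring]
    have e2 : Real.exp ((σ-r)/2) * Real.exp ((σ-r)/2) = Real.exp (σ - r) := by
      rw [← Real.exp_add, show (σ-r)/2 + (σ-r)/2 = σ - r by ring]
    calc (σ ^ (v/2) * Real.exp ((σ - r)/2) * |f σ|) ^ 2
        = (σ ^ (v/2) * σ ^ (v/2)) * (Real.exp ((σ-r)/2) * Real.exp ((σ-r)/2)) * (|f σ| * |f σ|) := by
          ring
      _ = σ ^ v * Real.exp (σ - r) * f σ ^ 2 := by rw [e1, e2, abs_mul_abs_self, sq]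
  have e1 : ∫⁻ σ in Set.Ioc (0:ℝ) r, ENNReal.ofReal (|σ ^ 2 * Real.exp (σ - r) * f σ|) =
      ∫⁻ σ, (F * G) σ ∂μ :=
    setLIntegral_congr_fun measurableSet_Ioc (fun σ hσ => hFG σ hσ)
  have e2 : ∫⁻ σ, F σ ^ (2:ℝ) ∂μ = ∫⁻ σ in Set.Ioc (0:ℝ) r, ENNReal.ofReal (σ ^ u * Real.exp (σ - r)) :=
    setLIntegral_congr_fun measurableSet_Ioc (fun σ hσ => hF2 σ hσ)
  have e3 : ∫⁻ σ, G σ ^ (2:ℝ) ∂μ =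
      ∫⁻ σ in Set.Ioc (0:ℝ) r, ENNReal.ofReal (σ ^ v * Real.exp (σ - r) * f σ ^ 2) :=
    setLIntegral_congr_fun measurableSet_Ioc (fun σ hσ => hG2 σ hσ)
  rw [e1]
  calc (∫⁻ σ, (F * G) σ ∂μ) ^ (2:ℝ)
      ≤ ((∫⁻ σ, F σ ^ (2:ℝ) ∂μ) ^ (1/(2:ℝ)) * (∫⁻ σ, G σ ^ (2:ℝ) ∂μ) ^ (1/(2:ℝ))) ^ (2:ℝ) :=
        ENNReal.rpow_le_rpow step1 (by norm_num)
    _ = (∫⁻ σ, F σ ^ (2:ℝ) ∂μ) * (∫⁻ σ, G σ ^ (2:ℝ) ∂μ) := by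
        rw [ENNReal.mul_rpow_of_nonneg _ _ (by norm_num : (0:ℝ) ≤ 2),
          ← ENNReal.rpow_mul, ← ENNReal.rpow_mul]
        norm_num
    _ = _ := by rw [e2, e3]

/-- For `t₁ ∈ [1,2)` and `t ∈ (t₁, t₁+1]` there is `C = C(t₁,t)` so
that for every measurable `f` with `∫₀^∞ |f(r)|² r^{1+2t₁} dr < ∞`, `𝓛[f]` is well
defined a.e. and `∫₀^∞ |𝓛[f](r)|² r^{1+2t} dr ≤ C ∫₀^∞ |f(r)|² r^{1+2t₁} dr`. -/
theorem statement_14 (t₁ t : ℝ) (ht₁ : t₁ ∈ Set.Ico (1 : ℝ) 2)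
    (ht : t ∈ Set.Ioc t₁ (t₁ + 1)) :
    ∃ C > (0 : ℝ), ∀ f : ℝ → ℝ, Measurable f →
      (∫⁻ r in Set.Ioi (0 : ℝ), ENNReal.ofReal (|f r| ^ 2 * r ^ (1 + 2 * t₁))) < ⊤ →
      (∀ᵐ r ∂(volume.restrict (Set.Ioi (0 : ℝ))),
        IntegrableOn (fun σ => σ ^ 2 * Real.exp (σ - r) * f σ) (Set.Ioc (0 : ℝ) r)) ∧
      (∫⁻ r in Set.Ioi (0 : ℝ), ENNReal.ofReal (|calL f r| ^ 2 * r ^ (1 + 2 * t))) ≤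
        ENNReal.ofReal C *
          ∫⁻ r in Set.Ioi (0 : ℝ), ENNReal.ofReal (|f r| ^ 2 * r ^ (1 + 2 * t₁)) := by
  obtain ⟨ht₁1, ht₁2⟩ := ht₁
  obtain ⟨htl, htr⟩ := ht
  set α : ℝ := 3 - 2 * t₁ with hα_def
  set v : ℝ := 1 + 2 * t₁ with hv_def
  set β : ℝ := 2 * t - 2 * t₁ - 2 with hβ_def
  have hα1 : -1 < α := by simp only [hα_def]; linarith
  have hβ1 : -2 < β := by simp only [hβ_def]; linarith
  have hβ2 : β ≤ 0 := by simp only [hβ_def]; linarith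
  have hα1' : (0:ℝ) < α + 1 := by linarith
  have hβ2' : (0:ℝ) < β + 2 := by linarith
  set c₁ : ℝ := 2 / (α + 1) + 2 with hc₁_def
  set c₂ : ℝ := 1 / (β + 2) + 1 with hc₂_def
  have hc₁ : 0 < c₁ := by positivity
  have hc₂ : 0 < c₂ := by positivity
  refine ⟨c₁ * c₂, by positivity, fun f hf hfin => ?_⟩
  set K := ∫⁻ r in Set.Ioi (0 : ℝ), ENNReal.ofReal (|f r| ^ 2 * r ^ v) with hK_def
  set B : ℝ → ℝ≥0∞ := fun r => ∫⁻ σ in Set.Ioc 0 r,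
    ENNReal.ofReal (σ ^ v * Real.exp (σ - r) * f σ ^ 2) with hB_def
  set A : ℝ → ℝ≥0∞ := fun r => ∫⁻ σ in Set.Ioc 0 r,
    ENNReal.ofReal (σ ^ α * Real.exp (σ - r)) with hA_def
  set J : ℝ → ℝ≥0∞ := fun r => ∫⁻ σ in Set.Ioc 0 r,
    ENNReal.ofReal (|σ ^ 2 * Real.exp (σ - r) * f σ|) with hJ_def
  have hBK : ∀ r : ℝ, B r ≤ K := by
    intro r
    have h1 : B r ≤ ∫⁻ σ in Set.Ioc 0 r, ENNReal.ofReal (|f σ| ^ 2 * σ ^ v) := by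
      refine setLIntegral_mono' measurableSet_Ioc fun σ hσ => ?_
      refine ENNReal.ofReal_le_ofReal ?_
      have he : Real.exp (σ - r) ≤ 1 := Real.exp_le_one_iff.2 (by linarith [hσ.2])
      have hσv : (0:ℝ) ≤ σ ^ v := Real.rpow_nonneg hσ.1.le _
      calc σ ^ v * Real.exp (σ - r) * f σ ^ 2 ≤ σ ^ v * 1 * f σ ^ 2 := by
            refine mul_le_mul_of_nonneg_right (mul_le_mul_of_nonneg_left he hσv) (sq_nonneg _)
        _ = |f σ| ^ 2 * σ ^ v := by rw [sq_abs]; ring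
    refine h1.trans ?_
    exact lintegral_mono_set Set.Ioc_subset_Ioi_self
  have hCS : ∀ r : ℝ, (J r) ^ (2:ℝ) ≤ A r * B r :=
    fun r => pointwiseCS α v (by simp only [hα_def, hv_def]; ring) f hf r
  have hAle : ∀ r : ℝ, 0 < r → A r ≤ ENNReal.ofReal (c₁ * (r ^ α * min r 1)) :=
    fun r hr => lemA hα1 hr
  have hKne : K ≠ ⊤ := hfin.ne
  have hJfin : ∀ r : ℝ, 0 < r → J r < ⊤ := by
    intro r hr
    have hAB : A r * B r < ⊤ := by
      refine ENNReal.mul_lt_top ?_ ?_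
      · exact ((hAle r hr).trans_lt ENNReal.ofReal_lt_top)
      · exact (hBK r).trans_lt hfin
    by_contra hcon
    rw [not_lt, top_le_iff] at hcon
    have := hCS r
    rw [hcon, ENNReal.top_rpow_of_pos (by norm_num)] at this
    exact absurd (this.trans_lt hAB) (lt_irrefl ⊤)
  constructor
  · rw [ae_restrict_iff' measurableSet_Ioi]
    refine Filter.Eventually.of_forall fun r hr => ?_
    refine ⟨?_, ?_⟩
    · exact (by fun_prop : Measurable fun σ : ℝ => σ ^ 2 * Real.exp (σ - r) * f σ).aestronglyMeasurable
    · rw [hasFiniteIntegral_iff_norm]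
      simp_rw [Real.norm_eq_abs]
      exact hJfin r hr
  · -- main estimate
    set g : ℝ → ℝ := fun r => r ^ β * min r 1 with hg_def
    have hg_nonneg : ∀ r : ℝ, 0 < r → 0 ≤ g r := fun r hr => by
      have : (0:ℝ) ≤ min r 1 := le_min hr.le one_pos.le
      positivity
    -- pointwise bound
    have hpt : ∀ r ∈ Set.Ioi (0:ℝ), ENNReal.ofReal (|calL f r| ^ 2 * r ^ (1 + 2 * t)) ≤
        ENNReal.ofReal c₁ * (ENNReal.ofReal (g r) * B r) := by
      intro r hr
      simp only [Set.mem_Ioi] at hr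
      set I : ℝ := ∫ σ in Set.Ioc (0 : ℝ) r, σ ^ 2 * Real.exp (σ - r) * f σ with hI_def
      have hr3 : (0:ℝ) < r ^ 3 := by positivity
      have heq : |calL f r| ^ 2 * r ^ (1 + 2 * t) = I ^ 2 * r ^ (2 * t - 5) := by
        have h1 : |calL f r| ^ 2 = I ^ 2 / r ^ 6 := by
          rw [calL, ← hI_def, sq_abs, div_pow, ← pow_mul]
        have h2 : r ^ (1 + 2 * t) = r ^ (2 * t - 5) * r ^ (6:ℕ) := by
          rw [← Real.rpow_natCast r 6, ← Real.rpow_add hr]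
          congr 1
          ring
        rw [h1, h2]
        field_simp
      rw [heq]
      have hIJ : ENNReal.ofReal (I ^ 2) ≤ (J r) ^ (2:ℝ) := by
        have h1 : |I| ≤ (J r).toReal := by
          have := MeasureTheory.norm_integral_le_lintegral_norm
            (μ := volume.restrict (Set.Ioc (0:ℝ) r)) (fun σ : ℝ => σ ^ 2 * Real.exp (σ - r) * f σ)
          simp_rw [Real.norm_eq_abs] at this
          exact this
        have h2 : ENNReal.ofReal (|I|) ≤ J r :=
          (ENNReal.ofReal_le_ofReal h1).trans ENNReal.ofReal_toReal_le
        calc ENNReal.ofReal (I ^ 2) = ENNReal.ofReal (|I|) ^ 2 := by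
              rw [← ENNReal.ofReal_pow (abs_nonneg _), sq_abs]
          _ ≤ (J r) ^ 2 := pow_le_pow_left' h2 2
          _ = (J r) ^ (2:ℝ) := by
              rw [← ENNReal.rpow_natCast (J r) 2]; norm_num
      calc ENNReal.ofReal (I ^ 2 * r ^ (2 * t - 5))
          = ENNReal.ofReal (I ^ 2) * ENNReal.ofReal (r ^ (2 * t - 5)) := by
            rw [← ENNReal.ofReal_mul (sq_nonneg _)]
        _ ≤ (A r * B r) * ENNReal.ofReal (r ^ (2 * t - 5)) := by
            refine mul_le_mul_of_nonneg_right (hIJ.trans (hCS r)) (zero_le)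
        _ ≤ (ENNReal.ofReal (c₁ * (r ^ α * min r 1)) * B r) * ENNReal.ofReal (r ^ (2 * t - 5)) := by
            refine mul_le_mul_of_nonneg_right (mul_le_mul_of_nonneg_right (hAle r hr) (zero_le)) (zero_le)
        _ = ENNReal.ofReal c₁ * (ENNReal.ofReal (g r) * B r) := by
            have hmin : (0:ℝ) ≤ min r 1 := le_min hr.le one_pos.le
            have hrab : r ^ α * r ^ (2 * t - 5) = r ^ β := by
              rw [← Real.rpow_add hr]
              congr 1
              simp only [hα_def, hβ_def]; ring
            have h5 : c₁ * (r ^ α * min r 1) * r ^ (2 * t - 5) = c₁ * g r := by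
              simp only [hg_def]
              rw [← hrab]; ring
            rw [mul_right_comm, ← ENNReal.ofReal_mul (by positivity), h5,
              ENNReal.ofReal_mul hc₁.le, mul_assoc]
    -- Fubini--Tonelli part
    set Φ : ℝ × ℝ → ℝ≥0∞ := fun p =>
      if 0 < p.2 ∧ p.2 ≤ p.1 then
        ENNReal.ofReal (p.2 ^ v * f p.2 ^ 2) *
          ENNReal.ofReal (g p.1 * Real.exp (p.2 - p.1)) else 0 with hΦ_def
    have hΦm : Measurable Φ := by
      refine Measurable.ite ?_ (by fun_prop) measurable_const
      exact (measurableSet_lt measurable_const measurable_snd).inter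
        (measurableSet_le measurable_snd measurable_fst)
    have hΦeq : ∀ r ∈ Set.Ioi (0:ℝ), (∫⁻ σ, Φ (r, σ)) = ENNReal.ofReal (g r) * B r := by
      intro r hr
      simp only [Set.mem_Ioi] at hr
      have h1 : (fun σ => Φ (r, σ)) = (Set.Ioc 0 r).indicator
          (fun σ => ENNReal.ofReal (g r) * ENNReal.ofReal (σ ^ v * Real.exp (σ - r) * f σ ^ 2)) := by
        funext σ
        by_cases hσ : σ ∈ Set.Ioc (0:ℝ) r
        · rw [Set.indicator_of_mem hσ]
          simp only [hΦ_def]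
          rw [if_pos ⟨hσ.1, hσ.2⟩]
          have hσv : (0:ℝ) ≤ σ ^ v := Real.rpow_nonneg hσ.1.le _
          rw [← ENNReal.ofReal_mul (mul_nonneg hσv (sq_nonneg _)),
            ← ENNReal.ofReal_mul (hg_nonneg r hr)]
          congr 1
          ring
        · rw [Set.indicator_of_notMem hσ]
          simp only [hΦ_def]
          rw [if_neg (fun hc => hσ ⟨hc.1, hc.2⟩)]
      rw [h1, lintegral_indicator measurableSet_Ioc,
        lintegral_const_mul' _ _ ENNReal.ofReal_ne_top]
    have hinner : ∀ σ : ℝ, (∫⁻ r in Set.Ioi (0:ℝ), Φ (r, σ)) ≤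
        (Set.Ioi (0:ℝ)).indicator
          (fun σ => ENNReal.ofReal c₂ * ENNReal.ofReal (|f σ| ^ 2 * σ ^ v)) σ := by
      intro σ
      by_cases hσ : 0 < σ
      · rw [Set.indicator_of_mem (Set.mem_Ioi.2 hσ)]
        have h1 : ∀ r ∈ Set.Ioi (0:ℝ), Φ (r, σ) = (Set.Ici σ).indicator
            (fun r => ENNReal.ofReal (σ ^ v * f σ ^ 2) *
              ENNReal.ofReal (g r * Real.exp (σ - r))) r := by
          intro r _
          by_cases hmem : r ∈ Set.Ici σ
          · rw [Set.indicator_of_mem hmem]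
            simp only [hΦ_def]
            rw [if_pos ⟨hσ, hmem⟩]
          · rw [Set.indicator_of_notMem hmem]
            simp only [hΦ_def]
            rw [if_neg (fun hc => hmem hc.2)]
        have hIci : Set.Ici σ ∩ Set.Ioi (0:ℝ) = Set.Ici σ :=
          Set.inter_eq_left.2 (fun x hx => lt_of_lt_of_le hσ hx)
        calc ∫⁻ r in Set.Ioi (0:ℝ), Φ (r, σ)
            = ∫⁻ r in Set.Ioi (0:ℝ), (Set.Ici σ).indicator
              (fun r => ENNReal.ofReal (σ ^ v * f σ ^ 2) *
                ENNReal.ofReal (g r * Real.exp (σ - r))) r :=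
              setLIntegral_congr_fun measurableSet_Ioi (fun r hr => h1 r hr)
          _ = ∫⁻ r in Set.Ici σ, ENNReal.ofReal (σ ^ v * f σ ^ 2) *
                ENNReal.ofReal (g r * Real.exp (σ - r)) := by
              rw [lintegral_indicator measurableSet_Ici,
                Measure.restrict_restrict measurableSet_Ici, hIci]
          _ = ∫⁻ r in Set.Ioi σ, ENNReal.ofReal (σ ^ v * f σ ^ 2) *
                ENNReal.ofReal (g r * Real.exp (σ - r)) := by
              rw [MeasureTheory.restrict_Ioi_eq_restrict_Ici]
          _ = ENNReal.ofReal (σ ^ v * f σ ^ 2) *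
                ∫⁻ r in Set.Ioi σ, ENNReal.ofReal (g r * Real.exp (σ - r)) :=
              lintegral_const_mul' _ _ ENNReal.ofReal_ne_top
          _ ≤ ENNReal.ofReal (σ ^ v * f σ ^ 2) * ENNReal.ofReal c₂ := by
              refine mul_le_mul_right ?_ _
              simp only [hc₂_def]
              exact lemH hβ1 hβ2 hσ
          _ = ENNReal.ofReal c₂ * ENNReal.ofReal (|f σ| ^ 2 * σ ^ v) := by
              rw [mul_comm]
              congr 1
              rw [sq_abs]
              ring
      · have hz : ∀ r, Φ (r, σ) = 0 := fun r => by
          simp only [hΦ_def]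
          rw [if_neg (fun hc => hσ hc.1)]
        simp only [hz, lintegral_zero]
        exact zero_le
    calc ∫⁻ r in Set.Ioi (0:ℝ), ENNReal.ofReal (|calL f r| ^ 2 * r ^ (1 + 2 * t))
        ≤ ∫⁻ r in Set.Ioi (0:ℝ), ENNReal.ofReal c₁ * (ENNReal.ofReal (g r) * B r) :=
          setLIntegral_mono' measurableSet_Ioi hpt
      _ = ENNReal.ofReal c₁ * ∫⁻ r in Set.Ioi (0:ℝ), ENNReal.ofReal (g r) * B r :=
          lintegral_const_mul' _ _ ENNReal.ofReal_ne_top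
      _ = ENNReal.ofReal c₁ * ∫⁻ r in Set.Ioi (0:ℝ), ∫⁻ σ, Φ (r, σ) := by
          congr 1
          exact (setLIntegral_congr_fun measurableSet_Ioi
            (fun r hr => (hΦeq r hr).symm))
      _ = ENNReal.ofReal c₁ * ∫⁻ σ, ∫⁻ r in Set.Ioi (0:ℝ), Φ (r, σ) := by
          congr 1
          exact lintegral_lintegral_swap hΦm.aemeasurable
      _ ≤ ENNReal.ofReal c₁ * ∫⁻ σ, (Set.Ioi (0:ℝ)).indicator
            (fun σ => ENNReal.ofReal c₂ * ENNReal.ofReal (|f σ| ^ 2 * σ ^ v)) σ := by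
          refine mul_le_mul_right (lintegral_mono hinner) _
      _ = ENNReal.ofReal c₁ * (ENNReal.ofReal c₂ * K) := by
          rw [lintegral_indicator measurableSet_Ioi,
            lintegral_const_mul' _ _ ENNReal.ofReal_ne_top]
      _ = ENNReal.ofReal (c₁ * c₂) * K := by
          rw [← mul_assoc, ← ENNReal.ofReal_mul hc₁.le]
end
end
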